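/- arXiv:1204.2136 — 7 statements merged into one kernel-verified Lean document; each statement's English description precedes it below -/
import Mathlib

section
/- Utility for directional variance queries (Theorem 4.3, conditional form): Let A be an n×d real matrix, w ≥ 0, B = (AᵀA + w²·I_d)^{1/2}, let r be a positive integer and 0 < η < 1/2. Then for every unit vector x ∈ ℝ^d, γ_{r×d}{ M : (1−η)·xᵀAᵀAx − ηw² ≤ (1/r)·‖M·(Bx)‖² − w² ≤ (1+η)·xᵀAᵀAx + ηw² } ≥ 1 − 2·exp(−η²r/8). -/
open MeasureTheory ProbabilityTheory Matrix

noncomputable section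

instance matMeas (m n : Type*) : MeasurableSpace (Matrix m n ℝ) :=
  inferInstanceAs (MeasurableSpace (m → n → ℝ))

/-- The standard Gaussian measure on `ι → ℝ`: iid standard normal coordinates. -/
def stdGaussianPi (ι : Type*) [Fintype ι] : Measure (ι → ℝ) :=
  Measure.pi fun _ => gaussianReal 0 1

instance (ι : Type*) [Fintype ι] : IsProbabilityMeasure (stdGaussianPi ι) := by
  unfold stdGaussianPi; infer_instance

/-- The measure on `m × ι` real matrices with iid standard normal entries. -/
def stdGaussianMatrix (m ι : Type*) [Fintype m] [Fintype ι] : Measure (Matrix m ι ℝ) :=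
  (Measure.pi fun _ : m => stdGaussianPi ι : Measure (m → ι → ℝ))

/-- Two `n×d` matrices are neighbors if they differ on a single row,
whose change has `ℓ₂`-norm at most 1. -/
def MatNeighbors {n d : ℕ} (A A' : Matrix (Fin n) (Fin d) ℝ) : Prop :=
  ∃ (i : Fin n) (v : Fin d → ℝ), Real.sqrt (∑ j, v j ^ 2) ≤ 1 ∧
    A' = A + Matrix.of fun k j => if k = i then v j else 0

/-- Mean-centering of the rows of `A`:  `A - (1/n)·J·A` with `J` the all-ones matrix. -/
def centerMat {n d : ℕ} (A : Matrix (Fin n) (Fin d) ℝ) : Matrix (Fin n) (Fin d) ℝ :=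
  A - ((n : ℝ)⁻¹) • ((Matrix.of fun _ _ : Fin n => (1 : ℝ)) * A)

section JLHelpers

open Real
open scoped ENNReal NNReal

lemma jl_pdf01_eq (t : ℝ) : gaussianPDFReal 0 1 t = (√(2*π))⁻¹ * rexp (-t^2/2) := by
  simp [gaussianPDFReal]

lemma jl_exp_key {a b z y : ℝ} (ha : a ≠ 0) (hab : a^2 + b^2 = 1) :
    -((z - b*y)/a)^2/2 + -y^2/2 = -(1/(2*a^2))*(y - b*z)^2 + -z^2/2 := by
  have h2 : a^2 ≠ 0 := pow_ne_zero 2 ha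
  field_simp
  linear_combination (z^2 - y^2) * hab

lemma jl_conv_integrand_eq {a b z : ℝ} (ha : a ≠ 0) (hab : a^2 + b^2 = 1) (y : ℝ) :
    |a|⁻¹ * (gaussianPDFReal 0 1 ((z - b*y)/a) * gaussianPDFReal 0 1 y)
      = (|a|⁻¹ * ((√(2*π))⁻¹ * (√(2*π))⁻¹ * rexp (-z^2/2)))
          * rexp (-(1/(2*a^2)) * ((y - b*z)^2)) := by
  rw [jl_pdf01_eq, jl_pdf01_eq]
  rw [show |a|⁻¹ * ((√(2*π))⁻¹ * rexp (-((z - b*y)/a)^2/2) * ((√(2*π))⁻¹ * rexp (-y^2/2)))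
      = |a|⁻¹ * ((√(2*π))⁻¹ * (√(2*π))⁻¹) * (rexp (-((z - b*y)/a)^2/2) * rexp (-y^2/2)) by ring]
  rw [← Real.exp_add, jl_exp_key ha hab, Real.exp_add]
  ring

lemma jl_conv_integrable {a b z : ℝ} (ha : a ≠ 0) (hab : a^2 + b^2 = 1) :
    Integrable (fun y => |a|⁻¹ * (gaussianPDFReal 0 1 ((z - b*y)/a) * gaussianPDFReal 0 1 y)) := by
  have h : (0:ℝ) < 1/(2*a^2) := by positivity
  have : Integrable (fun y : ℝ => rexp (-(1/(2*a^2)) * ((y - b*z)^2))) := by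
    have := (integrable_exp_neg_mul_sq h).comp_sub_right (b*z)
    simpa using this
  have := this.const_mul (|a|⁻¹ * ((√(2*π))⁻¹ * (√(2*π))⁻¹ * rexp (-z^2/2)))
  exact this.congr (Filter.Eventually.of_forall fun y => (jl_conv_integrand_eq ha hab y).symm)

lemma jl_conv_pdf {a b z : ℝ} (ha : a ≠ 0) (hab : a^2 + b^2 = 1) :
    ∫ y, |a|⁻¹ * (gaussianPDFReal 0 1 ((z - b*y)/a) * gaussianPDFReal 0 1 y)
      = gaussianPDFReal 0 1 z := by
  have h : (0:ℝ) < 1/(2*a^2) := by positivity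
  calc ∫ y, |a|⁻¹ * (gaussianPDFReal 0 1 ((z - b*y)/a) * gaussianPDFReal 0 1 y)
      = ∫ y, (|a|⁻¹ * ((√(2*π))⁻¹ * (√(2*π))⁻¹ * rexp (-z^2/2)))
          * rexp (-(1/(2*a^2)) * ((y - b*z)^2)) := by
        congr 1; ext y; exact jl_conv_integrand_eq ha hab y
    _ = (|a|⁻¹ * ((√(2*π))⁻¹ * (√(2*π))⁻¹ * rexp (-z^2/2)))
          * ∫ y, rexp (-(1/(2*a^2)) * ((y - b*z)^2)) := integral_const_mul _ _
    _ = (|a|⁻¹ * ((√(2*π))⁻¹ * (√(2*π))⁻¹ * rexp (-z^2/2))) * √(π/(1/(2*a^2))) := by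
        rw [show (fun y : ℝ => rexp (-(1/(2*a^2)) * ((y - b*z)^2)))
            = fun y : ℝ => (fun t : ℝ => rexp (-(1/(2*a^2)) * t^2)) (y - b*z) from rfl]
        rw [integral_sub_right_eq_self (fun t : ℝ => rexp (-(1/(2*a^2)) * t^2)) (b*z)]
        rw [integral_gaussian]
    _ = gaussianPDFReal 0 1 z := by
        rw [jl_pdf01_eq]
        have h1 : √(π/(1/(2*a^2))) = √(2*π) * |a| := by
          rw [show π/(1/(2*a^2)) = (2*π) * a^2 by field_simp,
            Real.sqrt_mul (by positivity), Real.sqrt_sq_eq_abs]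
        rw [h1]
        have h2 : (√(2*π)) ≠ 0 := by positivity
        field_simp

lemma jl_conv_pdf_lintegral {a b z : ℝ} (ha : a ≠ 0) (hab : a^2 + b^2 = 1) :
    ∫⁻ y, ENNReal.ofReal |a⁻¹| * (gaussianPDF 0 1 ((z - b*y)/a) * gaussianPDF 0 1 y)
      = gaussianPDF 0 1 z := by
  have h1 : ∀ y : ℝ, ENNReal.ofReal |a⁻¹| * (gaussianPDF 0 1 ((z - b*y)/a) * gaussianPDF 0 1 y)
      = ENNReal.ofReal (|a|⁻¹ * (gaussianPDFReal 0 1 ((z - b*y)/a) * gaussianPDFReal 0 1 y)) := by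
    intro y
    rw [gaussianPDF_def, abs_inv, ENNReal.ofReal_mul (by positivity),
      ENNReal.ofReal_mul (gaussianPDFReal_nonneg _ _ _)]
  simp_rw [h1]
  rw [← ofReal_integral_eq_lintegral_ofReal (jl_conv_integrable ha hab)
    (Filter.Eventually.of_forall fun y => mul_nonneg (by positivity)
      (mul_nonneg (gaussianPDFReal_nonneg _ _ _) (gaussianPDFReal_nonneg _ _ _))),
    jl_conv_pdf ha hab, gaussianPDF_def]

lemma jl_rot2 {a b : ℝ} (hab : a^2 + b^2 = 1) :
    ((gaussianReal 0 1).prod (gaussianReal 0 1)).map (fun p : ℝ × ℝ => a * p.1 + b * p.2)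
      = gaussianReal 0 1 := by
  by_cases ha : a = 0
  · have h1 : (fun p : ℝ × ℝ => a * p.1 + b * p.2) = (fun z => b * z) ∘ Prod.snd := by
      funext p; simp [ha]
    rw [h1, ← Measure.map_map (measurable_const_mul b) measurable_snd,
      Measure.map_snd_prod]
    simp only [measure_univ, one_smul]
    rw [gaussianReal_map_const_mul b]
    rw [mul_zero]
    congr 1
    rw [mul_one]
    ext
    rw [ha] at hab
    simpa using hab
  · have hmeas : Measurable (fun p : ℝ × ℝ => a * p.1 + b * p.2) :=
      (measurable_fst.const_mul a).add (measurable_snd.const_mul b)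
    have hφ : Measurable (gaussianPDF 0 1) := measurable_gaussianPDF 0 1
    have hγ : gaussianReal 0 1 = volume.withDensity (gaussianPDF 0 1) :=
      gaussianReal_of_var_ne_zero 0 one_ne_zero
    ext s hs
    set g : ℝ → ℝ≥0∞ := s.indicator (fun _ => 1) with hg
    have hgmeas : Measurable g := measurable_const.indicator hs
    have hE : MeasurableSet ((fun p : ℝ × ℝ => a * p.1 + b * p.2) ⁻¹' s) := hmeas hs
    rw [Measure.map_apply hmeas hs]
    rw [← lintegral_indicator_one hE]
    have hind : ∀ p : ℝ × ℝ, ((fun p : ℝ × ℝ => a * p.1 + b * p.2) ⁻¹' s).indicator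
        (fun _ => (1:ℝ≥0∞)) p = g (a * p.1 + b * p.2) := by
      intro p
      rw [hg]
      by_cases h : a * p.1 + b * p.2 ∈ s <;>
        simp [Set.indicator_apply, Set.mem_preimage, h]
    calc ∫⁻ p, ((fun p : ℝ × ℝ => a * p.1 + b * p.2) ⁻¹' s).indicator (fun _ => (1:ℝ≥0∞)) p
            ∂((gaussianReal 0 1).prod (gaussianReal 0 1))
        = ∫⁻ y, ∫⁻ x, g (a * x + b * y) ∂(gaussianReal 0 1) ∂(gaussianReal 0 1) := by
          simp_rw [hind]
          exact lintegral_prod_symm _ ((hgmeas.comp hmeas).aemeasurable)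
      _ = ∫⁻ y, (ENNReal.ofReal |a⁻¹| *
            ∫⁻ z, g z * gaussianPDF 0 1 ((z - b*y)/a)) ∂(gaussianReal 0 1) := by
          congr 1; funext y
          have step1 : ∫⁻ x, g (a * x + b * y) ∂(gaussianReal 0 1)
              = ∫⁻ x, (gaussianPDF 0 1 * fun x => g (a * x + b * y)) x := by
            rw [hγ]
            exact lintegral_withDensity_eq_lintegral_mul volume hφ (hgmeas.comp
              ((measurable_id.const_mul a).add_const _))
          rw [step1]
          have hF : Measurable (fun z => g z * gaussianPDF 0 1 ((z - b*y)/a)) :=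
            hgmeas.mul (hφ.comp (((measurable_id.sub_const _)).div_const a))
          have hT : Measurable (fun x : ℝ => a * x + b * y) :=
            (measurable_id.const_mul a).add_const _
          have hmapT : Measure.map (fun x : ℝ => a * x + b * y) volume
              = ENNReal.ofReal |a⁻¹| • volume := by
            have hcomp : (fun x : ℝ => a * x + b * y) = (fun z => z + b * y) ∘ (a * ·) := rfl
            rw [hcomp, ← Measure.map_map (measurable_add_const _) (measurable_const_mul a),
              Real.map_volume_mul_left ha, Measure.map_smul, map_add_right_eq_self]
          have key : ∀ x : ℝ, (gaussianPDF 0 1 * fun x => g (a * x + b * y)) x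
              = (fun z => g z * gaussianPDF 0 1 ((z - b*y)/a)) (a * x + b * y) := by
            intro x
            simp only [Pi.mul_apply]
            rw [show (a * x + b * y - b * y) / a = x by field_simp; ring]
            ring
          simp_rw [key]
          rw [← lintegral_map hF hT, hmapT, lintegral_smul_measure, smul_eq_mul]
      _ = ∫⁻ y, gaussianPDF 0 1 y * (ENNReal.ofReal |a⁻¹| *
            ∫⁻ z, g z * gaussianPDF 0 1 ((z - b*y)/a)) := by
          rw [hγ]
          exact lintegral_withDensity_eq_lintegral_mul volume hφ
            (by
              apply Measurable.const_mul
              exact Measurable.lintegral_prod_right'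
                (f := fun q : ℝ × ℝ => g q.2 * gaussianPDF 0 1 ((q.2 - b*q.1)/a))
                ((hgmeas.comp measurable_snd).mul (hφ.comp
                  (((measurable_snd.sub (measurable_fst.const_mul b))).div_const a))))
      _ = ∫⁻ y, ∫⁻ z, g z * (ENNReal.ofReal |a⁻¹| *
            (gaussianPDF 0 1 ((z - b*y)/a) * gaussianPDF 0 1 y)) := by
          congr 1; funext y
          symm
          have hrw : ∀ z : ℝ, g z * (ENNReal.ofReal |a⁻¹| *
              (gaussianPDF 0 1 ((z - b*y)/a) * gaussianPDF 0 1 y))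
              = gaussianPDF 0 1 y * (ENNReal.ofReal |a⁻¹| *
                (g z * gaussianPDF 0 1 ((z - b*y)/a))) := by intro z; ring
          simp_rw [hrw]
          have hX : Measurable (fun z : ℝ => g z * gaussianPDF 0 1 ((z - b*y)/a)) :=
            hgmeas.mul (hφ.comp ((measurable_id.sub_const _).div_const a))
          rw [lintegral_const_mul _ (hX.const_mul _), lintegral_const_mul _ hX]
      _ = ∫⁻ z, ∫⁻ y, g z * (ENNReal.ofReal |a⁻¹| *
            (gaussianPDF 0 1 ((z - b*y)/a) * gaussianPDF 0 1 y)) := by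
          apply lintegral_lintegral_swap
          apply Measurable.aemeasurable
          exact (hgmeas.comp measurable_snd).mul (measurable_const.mul
            ((hφ.comp ((measurable_snd.sub (measurable_fst.const_mul b)).div_const a)).mul
              (hφ.comp measurable_fst)))
      _ = ∫⁻ z, g z * gaussianPDF 0 1 z := by
          congr 1; funext z
          have hY : Measurable (fun y : ℝ => ENNReal.ofReal |a⁻¹| *
              (gaussianPDF 0 1 ((z - b*y)/a) * gaussianPDF 0 1 y)) :=
            measurable_const.mul ((hφ.comp
              ((measurable_const.sub (measurable_id.const_mul b)).div_const a)).mul hφ)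
          rw [lintegral_const_mul _ hY, jl_conv_pdf_lintegral ha hab]
      _ = gaussianReal 0 1 s := by
          rw [gaussianReal_apply 0 one_ne_zero s]
          rw [← lintegral_indicator hs]
          congr 1; funext z
          by_cases h : z ∈ s <;> simp [hg, Set.indicator_apply, h]

lemma jl_gauss_scale (c : ℝ) : (gaussianReal 0 1).map (c * ·)
    = gaussianReal 0 ((c^2).toNNReal) := by
  rw [gaussianReal_map_const_mul c, mul_zero]
  congr 1
  ext
  simp [Real.coe_toNNReal _ (sq_nonneg c)]

lemma jl_add_gauss (c : ℝ) (V : ℝ≥0) :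
    ((gaussianReal 0 1).prod (gaussianReal 0 V)).map (fun p : ℝ × ℝ => c * p.1 + p.2)
      = gaussianReal 0 (⟨c^2, sq_nonneg c⟩ + V) := by
  have hmeasf : Measurable (fun p : ℝ × ℝ => c * p.1 + p.2) :=
    (measurable_fst.const_mul c).add measurable_snd
  by_cases hV : V = 0
  · subst hV
    rw [gaussianReal_zero_var, Measure.prod_dirac,
      Measure.map_map hmeasf (by fun_prop : Measurable fun x : ℝ => (x, (0:ℝ)))]
    have : ((fun p : ℝ × ℝ => c * p.1 + p.2) ∘ fun x : ℝ => (x, (0:ℝ))) = (c * ·) := by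
      funext x; simp
    rw [this, jl_gauss_scale]
    have hval : (c^2).toNNReal = (⟨c^2, sq_nonneg c⟩ + 0 : ℝ≥0) := by
      ext; simp [Real.coe_toNNReal _ (sq_nonneg c)]
      exact (add_zero (c^2)).symm
    rw [hval]
  · have hVpos : (0:ℝ) < (V:ℝ) := by positivity
    set ρ : ℝ := Real.sqrt (c^2 + V) with hρ
    have hρpos : 0 < ρ := Real.sqrt_pos.mpr (by positivity)
    have hρsq : ρ^2 = c^2 + V := Real.sq_sqrt (by positivity)
    set a : ℝ := c / ρ
    set b : ℝ := Real.sqrt V / ρ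
    have hb2 : (Real.sqrt V)^2 = (V:ℝ) := Real.sq_sqrt hVpos.le
    have hab : a^2 + b^2 = 1 := by
      show (c/ρ)^2 + (√V/ρ)^2 = 1
      rw [div_pow, div_pow, hb2, ← add_div, ← hρsq, div_self (pow_ne_zero 2 hρpos.ne')]
    have hVmap : gaussianReal 0 V = (gaussianReal 0 1).map (Real.sqrt V * ·) := by
      rw [jl_gauss_scale, hb2, Real.toNNReal_coe]
    have hpm : (gaussianReal 0 1).prod ((gaussianReal 0 1).map (Real.sqrt V * ·))
        = ((gaussianReal 0 1).prod (gaussianReal 0 1)).map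
            (Prod.map (id : ℝ → ℝ) (Real.sqrt V * ·)) := by
      have h := Measure.map_prod_map (gaussianReal 0 1) (gaussianReal 0 1)
        (measurable_id : Measurable (id : ℝ → ℝ)) (measurable_const_mul (Real.sqrt V))
      rwa [Measure.map_id] at h
    rw [hVmap, hpm,
      Measure.map_map hmeasf (measurable_id.prodMap (measurable_const_mul _))]
    have hcomp : ((fun p : ℝ × ℝ => c * p.1 + p.2) ∘ Prod.map (id : ℝ → ℝ) (Real.sqrt V * ·))
        = (ρ * ·) ∘ (fun p : ℝ × ℝ => a * p.1 + b * p.2) := by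
      funext p
      simp only [Function.comp_apply, Prod.map_apply, id_eq]
      show c * p.1 + √V * p.2 = ρ * (c/ρ * p.1 + √V/ρ * p.2)
      field_simp
    rw [hcomp, ← Measure.map_map (f := fun p : ℝ × ℝ => a * p.1 + b * p.2) (measurable_const_mul ρ)
      ((measurable_fst.const_mul a).add (measurable_snd.const_mul b)),
      jl_rot2 hab, jl_gauss_scale]
    have hval : (ρ^2).toNNReal = (⟨c^2, sq_nonneg c⟩ + V : ℝ≥0) := by
      rw [hρsq]
      ext
      rw [Real.coe_toNNReal _ (by positivity)]
      rfl
    rw [hval]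

lemma jl_measurable_dot {d : ℕ} (u : Fin d → ℝ) :
    Measurable (fun v : Fin d → ℝ => v ⬝ᵥ u) := by
  unfold dotProduct
  exact Finset.measurable_sum _ fun i _ => (measurable_pi_apply i).mul_const _

lemma jl_dot_gauss {d : ℕ} (u : Fin d → ℝ) :
    (stdGaussianPi (Fin d)).map (fun v => v ⬝ᵥ u)
      = gaussianReal 0 ((∑ j, u j ^ 2).toNNReal) := by
  induction d with
  | zero =>
    have h0 : (fun v : Fin 0 → ℝ => v ⬝ᵥ u) = fun _ => (0:ℝ) := by
      funext v; simp [dotProduct]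
    rw [h0]
    have : (∑ j : Fin 0, u j ^ 2) = 0 := by simp
    rw [this, Real.toNNReal_zero, gaussianReal_zero_var, Measure.map_const]
    simp [stdGaussianPi]
  | succ d ih =>
    set e := MeasurableEquiv.piFinSuccAbove (fun _ : Fin (d+1) => ℝ) 0 with he
    have hmp := measurePreserving_piFinSuccAbove (fun _ : Fin (d+1) => gaussianReal 0 1) 0
    set u' : Fin d → ℝ := fun j => u j.succ with hu'
    set g : ℝ × (Fin d → ℝ) → ℝ := fun q => u 0 * q.1 + q.2 ⬝ᵥ u' with hgdef
    have hgmeas : Measurable g :=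
      (measurable_fst.const_mul _).add ((jl_measurable_dot u').comp measurable_snd)
    have hdecomp : (fun v : Fin (d+1) → ℝ => v ⬝ᵥ u) = g ∘ e := by
      funext v
      simp only [Function.comp_apply, hgdef, he, MeasurableEquiv.piFinSuccAbove_apply]
      rw [dotProduct, Fin.sum_univ_succ]
      simp [dotProduct, Fin.succAbove, mul_comm, hu', Fin.tail]
    rw [hdecomp, ← Measure.map_map hgmeas e.measurable]
    rw [show (stdGaussianPi (Fin (d+1))).map e
        = (gaussianReal 0 1).prod (stdGaussianPi (Fin d)) from hmp.map_eq]
    have hgcomp : g = (fun q : ℝ × ℝ => u 0 * q.1 + q.2) ∘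
        Prod.map (id : ℝ → ℝ) (fun v : Fin d → ℝ => v ⬝ᵥ u') := by
      funext q; simp [hgdef]
    rw [hgcomp, ← Measure.map_map (g := fun q : ℝ × ℝ => u 0 * q.1 + q.2)
      ((measurable_fst.const_mul _).add measurable_snd)
      (measurable_id.prodMap (jl_measurable_dot u'))]
    have hpm : (gaussianReal 0 1).prod ((stdGaussianPi (Fin d)).map (fun v => v ⬝ᵥ u'))
        = ((gaussianReal 0 1).prod (stdGaussianPi (Fin d))).map
            (Prod.map (id : ℝ → ℝ) (fun v : Fin d → ℝ => v ⬝ᵥ u')) := by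
      have h := Measure.map_prod_map (gaussianReal 0 1) (stdGaussianPi (Fin d))
        (measurable_id : Measurable (id : ℝ → ℝ)) (jl_measurable_dot u')
      rwa [Measure.map_id] at h
    rw [← hpm]
    rw [ih, jl_add_gauss]
    congr 1
    have h1 : 0 ≤ ∑ j, u' j ^ 2 := Finset.sum_nonneg fun _ _ => sq_nonneg _
    ext
    push_cast [Real.coe_toNNReal _ (by positivity : (0:ℝ) ≤ ∑ j, u j ^2),
      Real.coe_toNNReal _ h1]
    rw [Fin.sum_univ_succ]
    exact congrArg (u 0 ^ 2 + ·) (Real.coe_toNNReal _ h1)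

lemma jl_gauss_withDensity :
    gaussianReal 0 1 = volume.withDensity (fun x => ((gaussianPDFReal 0 1 x).toNNReal : ℝ≥0∞)) := by
  rw [gaussianReal_of_var_ne_zero 0 one_ne_zero]
  rfl

lemma jl_pdf_mul_exp {t : ℝ} (x : ℝ) :
    gaussianPDFReal 0 1 x * rexp (t * x^2) = (√(2*π))⁻¹ * rexp (-(1/2 - t) * x^2) := by
  have : gaussianPDFReal 0 1 x = (√(2*π))⁻¹ * rexp (-x^2/2) := by simp [gaussianPDFReal]
  rw [this, mul_assoc, ← Real.exp_add]
  ring_nf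

lemma jl_integrable_exp_sq_gauss {t : ℝ} (ht : t < 1/2) :
    Integrable (fun x => rexp (t * x^2)) (gaussianReal 0 1) := by
  rw [jl_gauss_withDensity, integrable_withDensity_iff_integrable_smul
    (measurable_gaussianPDFReal 0 1).real_toNNReal]
  have h : Integrable (fun x : ℝ => (√(2*π))⁻¹ * rexp (-(1/2 - t) * x^2)) :=
    (integrable_exp_neg_mul_sq (by linarith)).const_mul _
  refine h.congr (Filter.Eventually.of_forall fun x => ?_)
  show (√(2*π))⁻¹ * rexp (-(1/2 - t) * x^2) = (gaussianPDFReal 0 1 x).toNNReal • rexp (t * x^2)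
  rw [NNReal.smul_def, smul_eq_mul, Real.coe_toNNReal _ (gaussianPDFReal_nonneg 0 1 x),
    jl_pdf_mul_exp]

lemma jl_integral_exp_sq_gauss {t : ℝ} (ht : t < 1/2) :
    ∫ x, rexp (t * x^2) ∂(gaussianReal 0 1) = (√(1 - 2*t))⁻¹ := by
  rw [jl_gauss_withDensity, integral_withDensity_eq_integral_smul
    (measurable_gaussianPDFReal 0 1).real_toNNReal]
  have hsmul : ∀ x : ℝ, ((gaussianPDFReal 0 1 x).toNNReal : ℝ) • rexp (t * x^2)
      = (√(2*π))⁻¹ * rexp (-(1/2 - t) * x^2) := by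
    intro x
    rw [smul_eq_mul, Real.coe_toNNReal _ (gaussianPDFReal_nonneg 0 1 x), jl_pdf_mul_exp]
  calc ∫ x, (gaussianPDFReal 0 1 x).toNNReal • rexp (t * x^2)
      = ∫ x, (√(2*π))⁻¹ * rexp (-(1/2 - t) * x^2) := by
        congr 1; funext x; rw [← hsmul x]; rfl
    _ = (√(2*π))⁻¹ * ∫ x, rexp (-(1/2 - t) * x^2) := integral_const_mul _ _
    _ = (√(2*π))⁻¹ * √(π / (1/2 - t)) := by rw [integral_gaussian]
    _ = (√(1 - 2*t))⁻¹ := by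
        have h1 : (0:ℝ) < 1 - 2*t := by linarith
        have h2 : π / (1/2 - t) = (2*π) / (1 - 2*t) := by
          rw [div_eq_div_iff (by linarith : (0:ℝ) < 1/2 - t).ne' h1.ne']; ring
        rw [h2, show (2*π)/(1-2*t) = (2*π) * (1-2*t)⁻¹ by ring,
          show √((2*π)*(1-2*t)⁻¹) = √(2*π) * √((1-2*t)⁻¹) from
            Real.sqrt_mul (by positivity) _, Real.sqrt_inv]
        have h3 : √(2*π) ≠ 0 := by positivity
        have h4 : √(1-2*t) ≠ 0 := by positivity
        field_simp

lemma jl_key_upper {η : ℝ} (h1 : 0 < η) (h2 : η ≤ 1/2) :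
    rexp (-η/2) * √(1+η) ≤ rexp (-η^2/8) := by
  have hsq : (rexp (-η/2) * √(1+η))^2 ≤ (rexp (-η^2/8))^2 := by
    have e1 : (rexp (-η/2) * √(1+η))^2 = rexp (-η) * (1+η) := by
      rw [mul_pow, Real.sq_sqrt (by linarith), ← Real.exp_nat_mul]
      rw [show ((2:ℕ):ℝ) * (-η/2) = -η by push_cast; ring]
    have e2 : (rexp (-η^2/8))^2 = rexp (-η^2/4) := by
      rw [← Real.exp_nat_mul, show ((2:ℕ):ℝ) * (-η^2/8) = -η^2/4 by push_cast; ring]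
    rw [e1, e2]
    have hmain : 1 + η ≤ rexp (η - η^2/4) := by
      set s : ℝ := (η - η^2/4)/3 with hs
      have hs0 : 0 ≤ s := by rw [hs]; nlinarith
      have h3 : 1 + s ≤ rexp s := by linarith [Real.add_one_le_exp s]
      have h4 : (1+s)^3 ≤ (rexp s)^3 := by
        apply pow_le_pow_left₀ (by linarith) h3
      have h5 : (rexp s)^3 = rexp (η - η^2/4) := by
        rw [← Real.exp_nat_mul]
        congr 1
        rw [hs]; push_cast; ring
      have h6 : 1 + η ≤ (1+s)^3 := by
        rw [hs]
        have hx : 7*η/8 ≤ η - η^2/4 := by nlinarith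
        have hx0 : (0:ℝ) ≤ 7*η/8 := by linarith
        have hx2 : (7*η/8)^2 ≤ (η - η^2/4)^2 := by
          apply pow_le_pow_left₀ hx0 hx
        have hx3 : 0 ≤ (η - η^2/4)^3 := pow_nonneg (by nlinarith) 3
        nlinarith [hx2, hx3]
      linarith
    calc rexp (-η) * (1+η) ≤ rexp (-η) * rexp (η - η^2/4) := by
          apply mul_le_mul_of_nonneg_left hmain (Real.exp_nonneg _)
      _ = rexp (-η^2/4) := by rw [← Real.exp_add]; ring_nf
  have h7 : 0 ≤ rexp (-η/2) * √(1+η) := by positivity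
  nlinarith [Real.exp_pos (-η^2/8)]

lemma jl_key_lower {η : ℝ} (h1 : 0 < η) (h2 : η ≤ 1/2) :
    rexp (η/2) * √(1-η) ≤ rexp (-η^2/8) := by
  have hsq : (rexp (η/2) * √(1-η))^2 ≤ (rexp (-η^2/8))^2 := by
    have e1 : (rexp (η/2) * √(1-η))^2 = rexp η * (1-η) := by
      rw [mul_pow, Real.sq_sqrt (by linarith), ← Real.exp_nat_mul]
      rw [show ((2:ℕ):ℝ) * (η/2) = η by push_cast; ring]
    have e2 : (rexp (-η^2/8))^2 = rexp (-η^2/4) := by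
      rw [← Real.exp_nat_mul, show ((2:ℕ):ℝ) * (-η^2/8) = -η^2/4 by push_cast; ring]
    rw [e1, e2]
    have hmain : 1 - η ≤ rexp (-(η + η^2/4)) := by
      set q : ℝ := η/2 + η^2/8 with hq
      have hq1 : q ≤ 1 := by rw [hq]; nlinarith
      have h3 : 1 - q ≤ rexp (-q) := by linarith [Real.add_one_le_exp (-q)]
      have h4 : (1-q)^2 ≤ (rexp (-q))^2 := by
        apply pow_le_pow_left₀ (by linarith) h3
      have h5 : (rexp (-q))^2 = rexp (-(η + η^2/4)) := by
        rw [← Real.exp_nat_mul]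
        congr 1
        rw [hq]; push_cast; ring
      have h6 : 1 - η ≤ (1-q)^2 := by rw [hq]; nlinarith
      linarith
    calc rexp η * (1-η) ≤ rexp η * rexp (-(η + η^2/4)) := by
          apply mul_le_mul_of_nonneg_left hmain (Real.exp_nonneg _)
      _ = rexp (-η^2/4) := by rw [← Real.exp_add]; ring_nf
  have h7 : 0 ≤ rexp (η/2) * √(1-η) := by positivity
  nlinarith [Real.exp_pos (-η^2/8)]

lemma jl_chi_tail {α : Type*} [MeasurableSpace α] (μ : Measure α) [IsProbabilityMeasure μ]
    (X : α → ℝ) (r : ℕ)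
    (hint : ∀ t : ℝ, t < 1/2 → Integrable (fun a => rexp (t * X a)) μ)
    (hmgf : ∀ t : ℝ, t < 1/2 → mgf X μ t = ((√(1 - 2*t))⁻¹)^r)
    {η : ℝ} (hη : 0 < η) (hη2 : η < 1/2) :
    (μ {a | X a ≤ (1-η)*r}).toReal + (μ {a | (1+η)*r ≤ X a}).toReal
      ≤ 2 * rexp (-η^2*r/8) := by
  have hup : (μ {a | (1+η)*r ≤ X a}).toReal ≤ rexp (-η^2*r/8) := by
    set t : ℝ := η/(2*(1+η)) with htdef
    have ht0 : 0 ≤ t := by positivity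
    have ht : t < 1/2 := by
      rw [htdef, div_lt_div_iff₀ (by linarith) (by norm_num)]
      linarith
    have h1 : 1 - 2*t = (1+η)⁻¹ := by
      rw [htdef]; field_simp
      ring
    have hb := measure_ge_le_exp_mul_mgf (μ := μ) (X := X) ((1+η)*r) ht0 (hint t ht)
    rw [hmgf t ht, h1] at hb
    have h2 : (√(1+η)⁻¹)⁻¹ = √(1+η) := by rw [Real.sqrt_inv, inv_inv]
    rw [h2] at hb
    have h3 : -t * ((1+η)*r) = (-η/2) * r := by
      rw [htdef]; field_simp
    rw [h3] at hb
    refine hb.trans ?_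
    have h4 : rexp (-η/2 * r) * (√(1+η))^r = (rexp (-η/2) * √(1+η))^r := by
      rw [mul_pow, ← Real.exp_nat_mul]; ring_nf
    rw [h4, show rexp (-η^2*r/8) = (rexp (-η^2/8))^r by
      rw [← Real.exp_nat_mul]; ring_nf]
    exact pow_le_pow_left₀ (by positivity) (jl_key_upper hη hη2.le) r
  have hlo : (μ {a | X a ≤ (1-η)*r}).toReal ≤ rexp (-η^2*r/8) := by
    set t : ℝ := η/(2*(1-η)) with htdef
    have h1η : (0:ℝ) < 1 - η := by linarith
    have ht0 : 0 < t := by positivity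
    have ht : -t < 1/2 := by nlinarith
    have h1 : 1 - 2*(-t) = (1-η)⁻¹ := by
      rw [htdef]; field_simp
      ring
    have hb := measure_le_le_exp_mul_mgf (μ := μ) (X := X) ((1-η)*r)
      (neg_nonpos.mpr ht0.le) (hint (-t) ht)
    rw [hmgf (-t) ht, h1] at hb
    have h2 : (√(1-η)⁻¹)⁻¹ = √(1-η) := by rw [Real.sqrt_inv, inv_inv]
    rw [h2] at hb
    have h3 : -(-t) * ((1-η)*r) = (η/2) * r := by
      rw [htdef]; field_simp
    rw [h3] at hb
    refine hb.trans ?_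
    have h4 : rexp (η/2 * r) * (√(1-η))^r = (rexp (η/2) * √(1-η))^r := by
      rw [mul_pow, ← Real.exp_nat_mul]; ring_nf
    rw [h4, show rexp (-η^2*r/8) = (rexp (-η^2/8))^r by
      rw [← Real.exp_nat_mul]; ring_nf]
    exact pow_le_pow_left₀ (by positivity) (jl_key_lower hη hη2.le) r
  linarith

lemma jl_dot_self_mulVec {n d : ℕ} (C : Matrix (Fin n) (Fin d) ℝ) (x : Fin d → ℝ) :
    (C *ᵥ x) ⬝ᵥ (C *ᵥ x) = x ⬝ᵥ ((Cᵀ * C) *ᵥ x) := by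
  rw [← Matrix.mulVec_mulVec, Matrix.dotProduct_mulVec x, Matrix.vecMul_transpose]

lemma jl_scale_iff1 {a b σ ρ : ℝ} (hσ : 0 < σ) (hρ : 0 < ρ) :
    a * σ ≤ ρ⁻¹ * (σ * b) ↔ a * ρ ≤ b := by
  rw [inv_mul_eq_div, le_div_iff₀ hρ]
  constructor <;> intro h
  · have h2 : σ * (a * ρ) ≤ σ * b := by nlinarith
    exact (mul_le_mul_iff_right₀ hσ).mp h2
  · nlinarith

lemma jl_scale_iff2 {a b σ ρ : ℝ} (hσ : 0 < σ) (hρ : 0 < ρ) :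
    ρ⁻¹ * (σ * b) ≤ a * σ ↔ b ≤ a * ρ := by
  rw [inv_mul_eq_div, div_le_iff₀ hρ]
  constructor <;> intro h
  · have h2 : σ * b ≤ σ * (a * ρ) := by nlinarith
    exact (mul_le_mul_iff_right₀ hσ).mp h2
  · nlinarith

end JLHelpers

/-- Theorem 4.3 (conditional form): utility for directional variance queries.
`B` is the positive semidefinite square root of `AᵀA + w²I`. -/
theorem jl_directional_variance_utility {n d : ℕ} {A : Matrix (Fin n) (Fin d) ℝ}
    {w : ℝ} (hw : 0 ≤ w) {B : Matrix (Fin d) (Fin d) ℝ} (hB : B.PosSemidef)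
    (hB2 : B * B = Aᵀ * A + (w ^ 2) • (1 : Matrix (Fin d) (Fin d) ℝ))
    {r : ℕ} (hr : 0 < r) {η : ℝ} (hη : 0 < η) (hη2 : η < 1 / 2)
    (x : Fin d → ℝ) (hx : ∑ j, x j ^ 2 = 1) :
    stdGaussianMatrix (Fin r) (Fin d)
      {M : Matrix (Fin r) (Fin d) ℝ |
        (1 - η) * (x ⬝ᵥ ((Aᵀ * A) *ᵥ x)) - η * w ^ 2
            ≤ (r : ℝ)⁻¹ * (∑ i, (M *ᵥ (B *ᵥ x)) i ^ 2) - w ^ 2 ∧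
        (r : ℝ)⁻¹ * (∑ i, (M *ᵥ (B *ᵥ x)) i ^ 2) - w ^ 2
            ≤ (1 + η) * (x ⬝ᵥ ((Aᵀ * A) *ᵥ x)) + η * w ^ 2}
    ≥ ENNReal.ofReal (1 - 2 * Real.exp (-η ^ 2 * r / 8)) := by
  classical
  haveI : IsProbabilityMeasure (stdGaussianMatrix (Fin r) (Fin d)) :=
    inferInstanceAs (IsProbabilityMeasure
      (Measure.pi fun _ : Fin r => stdGaussianPi (Fin d)))
  set μ := stdGaussianMatrix (Fin r) (Fin d) with hμdef
  set y : Fin d → ℝ := B *ᵥ x with hy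
  set σ2 : ℝ := ∑ j, y j ^ 2 with hσ2
  have hσnn : 0 ≤ σ2 := Finset.sum_nonneg fun _ _ => sq_nonneg _
  have hxx : x ⬝ᵥ x = 1 := by
    have : x ⬝ᵥ x = ∑ j, x j ^ 2 := by simp [dotProduct, sq]
    rw [this, hx]
  have hBsym : Bᵀ = B := by
    have h : Bᴴ = B := hB.1
    rwa [Matrix.conjTranspose_eq_transpose_of_trivial] at h
  have hQσ : x ⬝ᵥ ((Aᵀ * A) *ᵥ x) + w ^ 2 = σ2 := by
    have hyy : σ2 = x ⬝ᵥ ((Bᵀ * B) *ᵥ x) := by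
      rw [hσ2, show ∑ j, y j ^ 2 = y ⬝ᵥ y by simp [dotProduct, sq], hy,
        jl_dot_self_mulVec]
    rw [hyy, hBsym, hB2, Matrix.add_mulVec, dotProduct_add,
      Matrix.smul_mulVec, Matrix.one_mulVec, dotProduct_smul, hxx,
      smul_eq_mul, mul_one]
  have hsetσ : {M : Matrix (Fin r) (Fin d) ℝ |
        (1 - η) * (x ⬝ᵥ ((Aᵀ * A) *ᵥ x)) - η * w ^ 2
            ≤ (r : ℝ)⁻¹ * (∑ i, (M *ᵥ y) i ^ 2) - w ^ 2 ∧
        (r : ℝ)⁻¹ * (∑ i, (M *ᵥ y) i ^ 2) - w ^ 2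
            ≤ (1 + η) * (x ⬝ᵥ ((Aᵀ * A) *ᵥ x)) + η * w ^ 2}
      = {M : Matrix (Fin r) (Fin d) ℝ |
          (1 - η) * σ2 ≤ (r : ℝ)⁻¹ * (∑ i, (M *ᵥ y) i ^ 2) ∧
          (r : ℝ)⁻¹ * (∑ i, (M *ᵥ y) i ^ 2) ≤ (1 + η) * σ2} := by
    ext M
    simp only [Set.mem_setOf_eq]
    have e1 : (1 - η) * σ2 = (1 - η) * (x ⬝ᵥ ((Aᵀ * A) *ᵥ x)) + (1 - η) * w ^ 2 := by
      rw [← hQσ]; ring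
    have e2 : (1 + η) * σ2 = (1 + η) * (x ⬝ᵥ ((Aᵀ * A) *ᵥ x)) + (1 + η) * w ^ 2 := by
      rw [← hQσ]; ring
    constructor
    · rintro ⟨h1, h2⟩
      exact ⟨by linarith, by linarith⟩
    · rintro ⟨h1, h2⟩
      exact ⟨by linarith, by linarith⟩
  rw [hsetσ]
  rcases eq_or_lt_of_le hσnn with hzero | hσpos
  · -- degenerate case: B *ᵥ x = 0
    have hyfun : y = 0 := by
      funext j
      have h := (Finset.sum_eq_zero_iff_of_nonneg
        (fun j _ => sq_nonneg (y j))).mp hzero.symm j (Finset.mem_univ j)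
      exact (pow_eq_zero_iff two_ne_zero).mp h
    have huniv : {M : Matrix (Fin r) (Fin d) ℝ |
          (1 - η) * σ2 ≤ (r : ℝ)⁻¹ * (∑ i, (M *ᵥ y) i ^ 2) ∧
          (r : ℝ)⁻¹ * (∑ i, (M *ᵥ y) i ^ 2) ≤ (1 + η) * σ2} = Set.univ := by
      ext M
      simp [hyfun, ← hzero, Matrix.mulVec_zero]
    rw [huniv, measure_univ]
    exact ENNReal.ofReal_le_one.mpr (by linarith [Real.exp_pos (-η ^ 2 * (r:ℝ) / 8)])
  · set s : ℝ := Real.sqrt σ2 with hsdef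
    have hs : 0 < s := Real.sqrt_pos.mpr hσpos
    have hs2 : s ^ 2 = σ2 := Real.sq_sqrt hσnn
    set u : Fin d → ℝ := fun j => y j / s with hu
    have husum : ∑ j, u j ^ 2 = 1 := by
      rw [hu]
      simp only [div_pow]
      rw [← Finset.sum_div, ← hσ2, hs2, div_self hσpos.ne']
    have hyu : y = s • u := by
      funext j
      rw [hu]
      simp only [Pi.smul_apply, smul_eq_mul]
      field_simp
    set T : Matrix (Fin r) (Fin d) ℝ → ℝ := fun M => ∑ i, (M *ᵥ u) i ^ 2 with hT
    have hST : ∀ M : Matrix (Fin r) (Fin d) ℝ, ∑ i, (M *ᵥ y) i ^ 2 = σ2 * T M := by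
      intro M
      rw [hyu, hT]
      simp only [Matrix.mulVec_smul, Pi.smul_apply, smul_eq_mul, mul_pow]
      rw [← Finset.mul_sum, hs2]
    have hrpos : (0:ℝ) < (r:ℝ) := by exact_mod_cast hr
    have hsetT : {M : Matrix (Fin r) (Fin d) ℝ |
          (1 - η) * σ2 ≤ (r : ℝ)⁻¹ * (∑ i, (M *ᵥ y) i ^ 2) ∧
          (r : ℝ)⁻¹ * (∑ i, (M *ᵥ y) i ^ 2) ≤ (1 + η) * σ2}
        = {M : Matrix (Fin r) (Fin d) ℝ |
            (1 - η) * (r:ℝ) ≤ T M ∧ T M ≤ (1 + η) * (r:ℝ)} := by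
      ext M
      simp only [Set.mem_setOf_eq, hST M]
      rw [jl_scale_iff1 hσpos hrpos, jl_scale_iff2 hσpos hrpos]
    rw [hsetT]
    -- measurability
    have hTmeas : Measurable T := by
      rw [hT]
      apply Finset.measurable_sum
      intro i _
      have h1 : Measurable (fun M : Matrix (Fin r) (Fin d) ℝ => M i) :=
        measurable_pi_apply i
      exact ((jl_measurable_dot u).comp h1).pow_const 2
    -- distribution of one row
    have hmap : (stdGaussianPi (Fin d)).map (fun v => v ⬝ᵥ u) = gaussianReal 0 1 := by
      rw [jl_dot_gauss u, husum, Real.toNNReal_one]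
    have hgsm : ∀ t : ℝ, StronglyMeasurable fun z : ℝ => Real.exp (t * z ^ 2) := fun t =>
      (Real.continuous_exp.comp ((continuous_const.mul (continuous_pow 2)))).stronglyMeasurable
    have hrow_int : ∀ t : ℝ, t < 1/2 →
        Integrable (fun v : Fin d → ℝ => Real.exp (t * (v ⬝ᵥ u) ^ 2)) (stdGaussianPi (Fin d)) := by
      intro t ht
      have h := jl_integrable_exp_sq_gauss ht
      rw [← hmap] at h
      exact (integrable_map_measure (hgsm t).aestronglyMeasurable
        (jl_measurable_dot u).aemeasurable).mp h
    have hrow_val : ∀ t : ℝ, t < 1/2 →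
        ∫ v, Real.exp (t * (v ⬝ᵥ u) ^ 2) ∂(stdGaussianPi (Fin d))
          = (Real.sqrt (1 - 2*t))⁻¹ := by
      intro t ht
      have h := integral_map (μ := stdGaussianPi (Fin d))
        (jl_measurable_dot u).aemeasurable (hgsm t).aestronglyMeasurable
      rw [hmap] at h
      rw [← h, jl_integral_exp_sq_gauss ht]
    letI : MeasureSpace (Fin d → ℝ) := ⟨stdGaussianPi (Fin d)⟩
    haveI : SigmaFinite (volume : Measure (Fin d → ℝ)) := by
      show SigmaFinite (stdGaussianPi (Fin d)); infer_instance
    have hexp_prod : ∀ (t : ℝ) (M : Matrix (Fin r) (Fin d) ℝ),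
        Real.exp (t * T M) = ∏ i, Real.exp (t * ((M *ᵥ u) i) ^ 2) := by
      intro t M
      rw [hT, Finset.mul_sum, Real.exp_sum]
    have hint : ∀ t : ℝ, t < 1/2 → Integrable (fun M => Real.exp (t * T M)) μ := by
      intro t ht
      have h := Integrable.fintype_prod (ι := Fin r)
        (f := fun _ (v : Fin d → ℝ) => Real.exp (t * (v ⬝ᵥ u) ^ 2)) (fun _ => hrow_int t ht)
      have heq : (fun M : Matrix (Fin r) (Fin d) ℝ => Real.exp (t * T M))
          = fun M => ∏ i, Real.exp (t * ((M *ᵥ u) i) ^ 2) := funext (hexp_prod t)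
      rw [heq]
      exact h
    have hmgf : ∀ t : ℝ, t < 1/2 → mgf T μ t = ((Real.sqrt (1 - 2*t))⁻¹) ^ r := by
      intro t ht
      have h := integral_fintype_prod_eq_pow (ι := Fin r)
        (fun v : Fin d → ℝ => Real.exp (t * (v ⬝ᵥ u) ^ 2)) (μ := (volume : Measure (Fin d → ℝ)))
      have hval' : (∫ v : Fin d → ℝ, Real.exp (t * (v ⬝ᵥ u) ^ 2))
          = (Real.sqrt (1 - 2*t))⁻¹ := hrow_val t ht
      rw [hval', Fintype.card_fin] at h
      have heq : (fun M : Matrix (Fin r) (Fin d) ℝ => Real.exp (t * T M))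
          = fun M => ∏ i, Real.exp (t * ((M *ᵥ u) i) ^ 2) := funext (hexp_prod t)
      show (∫ M, Real.exp (t * T M) ∂μ) = _
      rw [heq]
      exact h
    have htail := jl_chi_tail μ T r hint hmgf hη hη2
    set G : Set (Matrix (Fin r) (Fin d) ℝ) :=
      {M | (1 - η) * (r:ℝ) ≤ T M ∧ T M ≤ (1 + η) * (r:ℝ)} with hG
    have hGmeas : MeasurableSet G := by
      rw [hG, Set.setOf_and]
      exact (measurableSet_le measurable_const hTmeas).inter
        (measurableSet_le hTmeas measurable_const)
    have hsub : Gᶜ ⊆ {M | T M ≤ (1-η)*(r:ℝ)} ∪ {M | (1+η)*(r:ℝ) ≤ T M} := by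
      intro M hM
      simp only [hG, Set.mem_compl_iff, Set.mem_setOf_eq, not_and_or, not_le] at hM
      rcases hM with h | h
      · exact Or.inl h.le
      · exact Or.inr h.le
    have hcompl_le : (μ Gᶜ).toReal ≤ 2 * Real.exp (-η ^ 2 * r / 8) := by
      have h1 : μ Gᶜ ≤ μ {M | T M ≤ (1-η)*(r:ℝ)} + μ {M | (1+η)*(r:ℝ) ≤ T M} :=
        (measure_mono hsub).trans (measure_union_le _ _)
      have h2 : (μ Gᶜ).toReal ≤ (μ {M | T M ≤ (1-η)*(r:ℝ)}).toReal
          + (μ {M | (1+η)*(r:ℝ) ≤ T M}).toReal := by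
        rw [← ENNReal.toReal_add (measure_ne_top μ _) (measure_ne_top μ _)]
        exact ENNReal.toReal_mono
          (ENNReal.add_ne_top.mpr ⟨measure_ne_top μ _, measure_ne_top μ _⟩) h1
      exact h2.trans htail
    have hGval : (μ G).toReal = 1 - (μ Gᶜ).toReal := by
      have h3 := prob_compl_eq_one_sub (μ := μ) hGmeas.compl
      rw [compl_compl] at h3
      rw [h3, ENNReal.toReal_sub_of_le prob_le_one ENNReal.one_ne_top, ENNReal.toReal_one]
    have hfinal : 1 - 2 * Real.exp (-η ^ 2 * r / 8) ≤ (μ G).toReal := by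
      rw [hGval]; linarith
    calc ENNReal.ofReal (1 - 2 * Real.exp (-η ^ 2 * r / 8))
        ≤ ENNReal.ofReal ((μ G).toReal) := ENNReal.ofReal_le_ofReal hfinal
      _ = μ G := ENNReal.ofReal_toReal (measure_ne_top μ G)
end
end

section
/- Antitonicity of the Moore–Penrose pseudoinverse on quadratic forms (Fact 3.6 / Claim A.3): Let A and B be real symmetric positive semidefinite n×n matrices with the same kernel (A·x = 0 ↔ B·x = 0), and let P and Q be the Moore–Penrose pseudoinverses of A and B respectively. If xᵀAx ≤ xᵀBx for every x ∈ ℝ^n, then xᵀQx ≤ xᵀPx for every x ∈ ℝ^n. -/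
open Matrix

noncomputable section

/-- `(M *ᵥ v) ⬝ᵥ w = v ⬝ᵥ (Mᵀ *ᵥ w)`. -/
private lemma mulVec_dot {n : ℕ} (M : Matrix (Fin n) (Fin n) ℝ) (v w : Fin n → ℝ) :
    (M *ᵥ v) ⬝ᵥ w = v ⬝ᵥ (Mᵀ *ᵥ w) := by
  rw [Matrix.dotProduct_mulVec, Matrix.vecMul_transpose]

/-- Uniqueness of the Moore–Penrose pseudoinverse. -/
private lemma penrose_unique {n : ℕ} {A P₁ P₂ : Matrix (Fin n) (Fin n) ℝ}
    (h1 : A * P₁ * A = A) (h2 : P₁ * A * P₁ = P₁)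
    (h3 : (A * P₁)ᵀ = A * P₁) (h4 : (P₁ * A)ᵀ = P₁ * A)
    (k1 : A * P₂ * A = A) (k2 : P₂ * A * P₂ = P₂)
    (k3 : (A * P₂)ᵀ = A * P₂) (k4 : (P₂ * A)ᵀ = P₂ * A) :
    P₁ = P₂ := by
  have hAP : A * P₁ = A * P₂ := by
    calc A * P₁ = (A * P₁)ᵀ := h3.symm
    _ = ((A * P₂ * A) * P₁)ᵀ := by rw [k1]
    _ = (A * P₁)ᵀ * (A * P₂)ᵀ := by
        rw [← Matrix.transpose_mul]; simp only [Matrix.mul_assoc]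
    _ = (A * P₁) * (A * P₂) := by rw [h3, k3]
    _ = (A * P₁ * A) * P₂ := by simp only [Matrix.mul_assoc]
    _ = A * P₂ := by rw [h1]
  have hPA : P₁ * A = P₂ * A := by
    calc P₁ * A = (P₁ * A)ᵀ := h4.symm
    _ = (P₁ * ((A * P₂) * A))ᵀ := by rw [k1]
    _ = (P₂ * A)ᵀ * (P₁ * A)ᵀ := by
        rw [← Matrix.transpose_mul]; simp only [Matrix.mul_assoc]
    _ = (P₂ * A) * (P₁ * A) := by rw [h4, k4]
    _ = P₂ * (A * P₁ * A) := by simp only [Matrix.mul_assoc]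
    _ = P₂ * A := by rw [h1]
  calc P₁ = P₁ * A * P₁ := h2.symm
  _ = P₁ * (A * P₂) := by rw [← hAP, Matrix.mul_assoc]
  _ = (P₁ * A) * P₂ := by rw [Matrix.mul_assoc]
  _ = P₂ * A * P₂ := by rw [hPA]
  _ = P₂ := k2

/-- Fact 3.6 / Claim A.3: antitonicity of the Moore–Penrose pseudoinverse on quadratic forms.
`P` and `Q` are the Moore–Penrose pseudoinverses of `A` and `B` (given by the four Penrose
equations); if `A` and `B` are PSD with the same kernel and `xᵀAx ≤ xᵀBx` for all `x`,
then `xᵀQx ≤ xᵀPx` for all `x`. -/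
theorem pseudoinverse_quadform_antitone {n : ℕ} {A B P Q : Matrix (Fin n) (Fin n) ℝ}
    (hA : A.PosSemidef) (hB : B.PosSemidef)
    (hker : ∀ x : Fin n → ℝ, A *ᵥ x = 0 ↔ B *ᵥ x = 0)
    (hP : A * P * A = A ∧ P * A * P = P ∧ (A * P)ᵀ = A * P ∧ (P * A)ᵀ = P * A)
    (hQ : B * Q * B = B ∧ Q * B * Q = Q ∧ (B * Q)ᵀ = B * Q ∧ (Q * B)ᵀ = Q * B)
    (hle : ∀ x : Fin n → ℝ, x ⬝ᵥ (A *ᵥ x) ≤ x ⬝ᵥ (B *ᵥ x)) :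
    ∀ x : Fin n → ℝ, x ⬝ᵥ (Q *ᵥ x) ≤ x ⬝ᵥ (P *ᵥ x) := by
  obtain ⟨hP1, hP2, hP3, hP4⟩ := hP
  obtain ⟨hQ1, hQ2, hQ3, hQ4⟩ := hQ
  have hAt : Aᵀ = A := by
    have := hA.isHermitian
    simpa [Matrix.IsSymm] using this
  have hBt : Bᵀ = B := by
    have := hB.isHermitian
    simpa [Matrix.IsSymm] using this
  -- symmetry of P: Pᵀ satisfies the Penrose equations for A
  have hPt : Pᵀ = P := by
    refine (penrose_unique ?_ ?_ ?_ ?_ hP1 hP2 hP3 hP4)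
    · calc A * Pᵀ * A = (Aᵀ * P * Aᵀ)ᵀ := by
            simp [Matrix.transpose_mul, hAt, Matrix.mul_assoc]
      _ = A := by rw [hAt, hP1, hAt]
    · calc Pᵀ * A * Pᵀ = (P * Aᵀ * P)ᵀ := by
            simp [Matrix.transpose_mul, Matrix.mul_assoc]
      _ = Pᵀ := by rw [hAt, hP2]
    · -- (A * Pᵀ)ᵀ = A * Pᵀ
      have h : A * Pᵀ = (P * A)ᵀ := by rw [Matrix.transpose_mul, hAt]
      rw [h, Matrix.transpose_transpose, hP4]
    · have h : Pᵀ * A = (A * P)ᵀ := by rw [Matrix.transpose_mul, hAt]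
      rw [h, Matrix.transpose_transpose, hP3]
  have hQt : Qᵀ = Q := by
    refine (penrose_unique ?_ ?_ ?_ ?_ hQ1 hQ2 hQ3 hQ4)
    · calc B * Qᵀ * B = (Bᵀ * Q * Bᵀ)ᵀ := by
            simp [Matrix.transpose_mul, hBt, Matrix.mul_assoc]
      _ = B := by rw [hBt, hQ1, hBt]
    · calc Qᵀ * B * Qᵀ = (Q * Bᵀ * Q)ᵀ := by
            simp [Matrix.transpose_mul, Matrix.mul_assoc]
      _ = Qᵀ := by rw [hBt, hQ2]
    · have h : B * Qᵀ = (Q * B)ᵀ := by rw [Matrix.transpose_mul, hBt]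
      rw [h, Matrix.transpose_transpose, hQ4]
    · have h : Qᵀ * B = (B * Q)ᵀ := by rw [Matrix.transpose_mul, hBt]
      rw [h, Matrix.transpose_transpose, hQ3]
  -- B*Q and A*P are symmetric, hence commute with their factors
  have hBQcomm : B * Q = Q * B := by
    rw [← hQ3, Matrix.transpose_mul, hQt, hBt]
  have hAPcomm : A * P = P * A := by
    rw [← hP3, Matrix.transpose_mul, hPt, hAt]
  -- A * (B * Q) = A and B * (A * P) = B (from the kernel condition)
  have hAQB : A * (Q * B) = A := by
    have hcol : ∀ x : Fin n → ℝ, (A * (Q * B)) *ᵥ x = A *ᵥ x := by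
      intro x
      have hbz : B *ᵥ (x - (Q * B) *ᵥ x) = 0 := by
        rw [Matrix.mulVec_sub, Matrix.mulVec_mulVec, ← Matrix.mul_assoc, hQ1, sub_self]
      have haz := (hker _).mpr hbz
      rw [Matrix.mulVec_sub, Matrix.mulVec_mulVec] at haz
      exact (sub_eq_zero.mp haz).symm
    ext i j
    have := congrFun (hcol (Pi.single j 1)) i
    simpa [Matrix.mulVec_single] using this
  have hBPA : B * (P * A) = B := by
    have hcol : ∀ x : Fin n → ℝ, (B * (P * A)) *ᵥ x = B *ᵥ x := by
      intro x
      have haz : A *ᵥ (x - (P * A) *ᵥ x) = 0 := by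
        rw [Matrix.mulVec_sub, Matrix.mulVec_mulVec, ← Matrix.mul_assoc, hP1, sub_self]
      have hbz := (hker _).mp haz
      rw [Matrix.mulVec_sub, Matrix.mulVec_mulVec] at hbz
      exact (sub_eq_zero.mp hbz).symm
    ext i j
    have := congrFun (hcol (Pi.single j 1)) i
    simpa [Matrix.mulVec_single] using this
  have hABQ : A * (B * Q) = A := by rw [hBQcomm]; exact hAQB
  have hBAP : B * (A * P) = B := by rw [hAPcomm]; exact hBPA
  -- A*P = B*Q (equal orthogonal projections)
  have hAPBQ : A * P = B * Q := by
    have h1 : (A * P) * (B * Q) = A * P := by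
      have h : A * P = Pᵀ * A := by rw [← hP3, Matrix.transpose_mul, hAt]
      calc (A * P) * (B * Q) = Pᵀ * (A * (B * Q)) := by
            rw [h, Matrix.mul_assoc]
      _ = Pᵀ * A := by rw [hABQ]
      _ = A * P := h.symm
    have h2 : (B * Q) * (A * P) = B * Q := by
      have h : B * Q = Qᵀ * B := by rw [← hQ3, Matrix.transpose_mul, hBt]
      calc (B * Q) * (A * P) = Qᵀ * (B * (A * P)) := by
            rw [h, Matrix.mul_assoc]
      _ = Qᵀ * B := by rw [hBAP]
      _ = B * Q := h.symm
    calc A * P = (A * P)ᵀ := hP3.symm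
    _ = ((A * P) * (B * Q))ᵀ := by rw [h1]
    _ = (B * Q)ᵀ * (A * P)ᵀ := by rw [Matrix.transpose_mul]
    _ = (B * Q) * (A * P) := by rw [hP3, hQ3]
    _ = B * Q := h2
  -- key matrix identities (left-associated)
  have hQAP : Q * A * P = Q := by
    rw [Matrix.mul_assoc, hAPBQ, ← Matrix.mul_assoc, hQ2]
  have hPAQ : P * A * Q = Q := by
    have h := congrArg Matrix.transpose hQAP
    simp only [Matrix.transpose_mul, hAt, hPt, hQt] at h
    rw [← Matrix.mul_assoc] at h
    exact h
  -- the scalar computation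
  intro x
  set u := Q *ᵥ x with hu
  set w := P *ᵥ x with hw
  have e1 : u ⬝ᵥ (A *ᵥ w) = x ⬝ᵥ (Q *ᵥ x) := by
    rw [hu, hw, mulVec_dot, hQt, Matrix.mulVec_mulVec, Matrix.mulVec_mulVec,
      hQAP]
  have e2 : w ⬝ᵥ (A *ᵥ u) = x ⬝ᵥ (Q *ᵥ x) := by
    rw [hu, hw, mulVec_dot, hPt, Matrix.mulVec_mulVec, Matrix.mulVec_mulVec,
      hPAQ]
  have e3 : w ⬝ᵥ (A *ᵥ w) = x ⬝ᵥ (P *ᵥ x) := by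
    rw [hw, mulVec_dot, hPt, Matrix.mulVec_mulVec, Matrix.mulVec_mulVec,
      hP2]
  have e4 : u ⬝ᵥ (B *ᵥ u) = x ⬝ᵥ (Q *ᵥ x) := by
    rw [hu, mulVec_dot, hQt, Matrix.mulVec_mulVec, Matrix.mulVec_mulVec,
      hQ2]
  have e5 : (u - w) ⬝ᵥ (A *ᵥ (u - w))
      = u ⬝ᵥ (A *ᵥ u) - u ⬝ᵥ (A *ᵥ w) - w ⬝ᵥ (A *ᵥ u) + w ⬝ᵥ (A *ᵥ w) := by
    rw [Matrix.mulVec_sub]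
    simp only [dotProduct_sub, sub_dotProduct]
    ring
  have n1 : 0 ≤ (u - w) ⬝ᵥ (A *ᵥ (u - w)) := by
    have := hA.dotProduct_mulVec_nonneg (u - w)
    simpa using this
  have n2 : u ⬝ᵥ (A *ᵥ u) ≤ u ⬝ᵥ (B *ᵥ u) := hle u
  linarith
end
end

section
/- Determinant ratio bound under a rank-one row perturbation (inequality (5)): Let w > 0 and let A, A′ be n×d real matrices with A′ = A + e_i vᵀ for some index i and unit vector v ∈ ℝ^d. Assume ‖Ax‖₂ ≥ w‖x‖₂ and ‖A′x‖₂ ≥ w‖x‖₂ for every x ∈ ℝ^d (all singular values of A and A′ are at least w). Then e^{−2/w} ≤ det(A′ᵀA′)/det(AᵀA) ≤ e^{2/w}. -/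
open Matrix

set_option maxHeartbeats 1000000

noncomputable section

private lemma quad_form {n d : ℕ} (A : Matrix (Fin n) (Fin d) ℝ) (x : Fin d → ℝ) :
    x ⬝ᵥ ((Aᵀ * A) *ᵥ x) = ∑ k, (A *ᵥ x) k ^ 2 := by
  rw [← mulVec_mulVec, dotProduct_mulVec, vecMul_transpose]
  simp [dotProduct, sq]

private lemma sq_le_of_sqrt_le {w s t : ℝ} (hw : 0 ≤ w) (hs : 0 ≤ s) (ht : 0 ≤ t)
    (h : w * Real.sqrt s ≤ Real.sqrt t) : w ^ 2 * s ≤ t := by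
  have h1 : (w * Real.sqrt s) * (w * Real.sqrt s) ≤ Real.sqrt t * Real.sqrt t :=
    mul_le_mul h h (by positivity) (Real.sqrt_nonneg _)
  rw [Real.mul_self_sqrt ht] at h1
  nlinarith [Real.sq_sqrt hs]

private lemma posdef_of_sv {n d : ℕ} {w : ℝ} (hw : 0 < w)
    {A : Matrix (Fin n) (Fin d) ℝ}
    (hAsv : ∀ x : Fin d → ℝ,
      w * Real.sqrt (∑ j, x j ^ 2) ≤ Real.sqrt (∑ k, (A *ᵥ x) k ^ 2)) :
    (Aᵀ * A).PosDef := by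
  refine .of_dotProduct_mulVec_pos (by simpa using isHermitian_conjTranspose_mul_self A) fun x hx => ?_
  have hs : (0:ℝ) ≤ ∑ j, x j ^ 2 := Finset.sum_nonneg fun _ _ => sq_nonneg _
  have ht : (0:ℝ) ≤ ∑ k, (A *ᵥ x) k ^ 2 := Finset.sum_nonneg fun _ _ => sq_nonneg _
  have hq : w ^ 2 * ∑ j, x j ^ 2 ≤ ∑ k, (A *ᵥ x) k ^ 2 :=
    sq_le_of_sqrt_le hw.le hs ht (hAsv x)
  have hxpos : 0 < ∑ j, x j ^ 2 := by
    rcases Function.ne_iff.mp hx with ⟨j, hj⟩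
    exact Finset.sum_pos' (fun _ _ => sq_nonneg _)
      ⟨j, Finset.mem_univ j, pow_two_pos_of_ne_zero hj⟩
  have hwpos : 0 < w ^ 2 * ∑ j, x j ^ 2 := by positivity
  have : 0 < x ⬝ᵥ ((Aᵀ * A) *ᵥ x) := by
    rw [quad_form]; linarith
  simpa using this

private lemma key {n d : ℕ} {w : ℝ} (hw : 0 < w)
    {A A' : Matrix (Fin n) (Fin d) ℝ} {i : Fin n} {v : Fin d → ℝ}
    (hv : ∑ j, v j ^ 2 = 1)
    (hA' : A' = A + Matrix.of fun k j => if k = i then v j else 0)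
    (hAsv : ∀ x : Fin d → ℝ,
      w * Real.sqrt (∑ j, x j ^ 2) ≤ Real.sqrt (∑ k, (A *ᵥ x) k ^ 2)) :
    (A'ᵀ * A').det ≤ Real.exp (2 / w) * (Aᵀ * A).det := by
  set M := Aᵀ * A with hMdef
  have hQ : ∀ x : Fin d → ℝ, w ^ 2 * ∑ j, x j ^ 2 ≤ x ⬝ᵥ (M *ᵥ x) := by
    intro x
    have hs : (0:ℝ) ≤ ∑ j, x j ^ 2 := Finset.sum_nonneg fun _ _ => sq_nonneg _
    have ht : (0:ℝ) ≤ ∑ k, (A *ᵥ x) k ^ 2 := Finset.sum_nonneg fun _ _ => sq_nonneg _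
    rw [hMdef, quad_form]
    exact sq_le_of_sqrt_le hw.le hs ht (hAsv x)
  have hPD : M.PosDef := posdef_of_sv hw hAsv
  have hdet : 0 < M.det := hPD.det_pos
  have hu : IsUnit M.det := hdet.ne'.isUnit
  have hMM : M * M⁻¹ = 1 := mul_nonsing_inv M hu
  have hMsymmT : Mᵀ = M := by
    rw [hMdef, transpose_mul, transpose_transpose]
  have hMinvT : M⁻¹ᵀ = M⁻¹ := by
    rw [transpose_nonsing_inv, hMsymmT]
  have hsymm : ∀ x y : Fin d → ℝ, x ⬝ᵥ (M⁻¹ *ᵥ y) = y ⬝ᵥ (M⁻¹ *ᵥ x) := by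
    intro x y
    rw [dotProduct_mulVec, show x ᵥ* M⁻¹ = M⁻¹ *ᵥ x from by rw [← vecMul_transpose, hMinvT],
      dotProduct_comm]
  have hMMv : ∀ x : Fin d → ℝ, M *ᵥ (M⁻¹ *ᵥ x) = x := by
    intro x; rw [mulVec_mulVec, hMM, one_mulVec]
  have hinv_nonneg : ∀ x : Fin d → ℝ, 0 ≤ x ⬝ᵥ (M⁻¹ *ᵥ x) := by
    intro x
    have h1 : x ⬝ᵥ (M⁻¹ *ᵥ x) = (M⁻¹ *ᵥ x) ⬝ᵥ (M *ᵥ (M⁻¹ *ᵥ x)) := by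
      rw [hMMv, dotProduct_comm]
    have h2 := hQ (M⁻¹ *ᵥ x)
    have hs : (0:ℝ) ≤ ∑ j, (M⁻¹ *ᵥ x) j ^ 2 := Finset.sum_nonneg fun _ _ => sq_nonneg _
    have hws : 0 ≤ w ^ 2 * ∑ j, (M⁻¹ *ᵥ x) j ^ 2 := by positivity
    rw [h1]; linarith
  set a : Fin d → ℝ := fun j => A i j with ha
  set α := v ⬝ᵥ (M⁻¹ *ᵥ v) with hαdef
  set β := v ⬝ᵥ (M⁻¹ *ᵥ a) with hβdef
  set γ := a ⬝ᵥ (M⁻¹ *ᵥ a) with hγdef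
  -- determinant formula
  have hdet_eq : (A'ᵀ * A').det = M.det * ((1 + β) ^ 2 + α * (1 - γ)) := by
    set U : Matrix (Fin d) (Fin 2) ℝ :=
      Matrix.of fun (j : Fin d) (t : Fin 2) => if t = 0 then a j else v j with hU
    set V : Matrix (Fin 2) (Fin d) ℝ :=
      Matrix.of fun (t : Fin 2) (k : Fin d) => if t = 0 then v k else a k + v k with hV
    have h1 : A'ᵀ * A' = M + U * V := by
      subst hA'
      ext j k
      simp [hU, hV, hMdef, ha, mul_apply, Fin.sum_univ_two, add_mul, mul_add,
        Finset.sum_add_distrib, Finset.sum_ite_eq', ite_and]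
      ring
    have h2 : M + U * V = M * (1 + M⁻¹ * U * V) := by
      rw [mul_add, mul_one, ← Matrix.mul_assoc, ← Matrix.mul_assoc, hMM, Matrix.one_mul]
    have h3 : (1 + V * (M⁻¹ * U)).det
        = (1 + v ⬝ᵥ (M⁻¹ *ᵥ a)) * (1 + a ⬝ᵥ (M⁻¹ *ᵥ v) + v ⬝ᵥ (M⁻¹ *ᵥ v))
          - (v ⬝ᵥ (M⁻¹ *ᵥ v)) * (a ⬝ᵥ (M⁻¹ *ᵥ a) + v ⬝ᵥ (M⁻¹ *ᵥ a)) := by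
      rw [det_fin_two]
      simp [hU, hV, mul_apply, mulVec, dotProduct, Finset.mul_sum,
        Finset.sum_add_distrib, add_mul, mul_add]
      ring
    rw [h1, h2, det_mul, det_one_add_mul_comm, h3, hsymm a v, ← hαdef, ← hβdef, ← hγdef]
    ring
  -- scalar bounds
  have hα0 : 0 ≤ α := hinv_nonneg v
  have hγ0 : 0 ≤ γ := hinv_nonneg a
  have hαw : α * w ^ 2 ≤ 1 := by
    have hcs : α ^ 2 ≤ (∑ j, v j ^ 2) * ∑ j, (M⁻¹ *ᵥ v) j ^ 2 := by
      rw [hαdef, dotProduct]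
      exact Finset.sum_mul_sq_le_sq_mul_sq Finset.univ v (M⁻¹ *ᵥ v)
    rw [hv, one_mul] at hcs
    have hyq : w ^ 2 * ∑ j, (M⁻¹ *ᵥ v) j ^ 2 ≤ α := by
      have h1 := hQ (M⁻¹ *ᵥ v)
      have h2 : (M⁻¹ *ᵥ v) ⬝ᵥ (M *ᵥ (M⁻¹ *ᵥ v)) = α := by
        rw [hMMv, dotProduct_comm, ← hαdef]
      exact le_of_le_of_eq h1 h2
    have h3 : w ^ 2 * α ^ 2 ≤ α := by
      have := mul_le_mul_of_nonneg_left hcs (sq_nonneg w)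
      linarith
    nlinarith [sq_nonneg (w ^ 2 * α - 1), mul_le_mul_of_nonneg_left h3 (sq_nonneg w)]
  have hγ1 : γ ≤ 1 := by
    have hpi : (A *ᵥ (M⁻¹ *ᵥ a)) i = a ⬝ᵥ (M⁻¹ *ᵥ a) := by
      simp [mulVec, dotProduct, ha]
    have hpp : (A *ᵥ (M⁻¹ *ᵥ a)) ⬝ᵥ (A *ᵥ (M⁻¹ *ᵥ a)) = a ⬝ᵥ (M⁻¹ *ᵥ a) := by
      have h1 : (A *ᵥ (M⁻¹ *ᵥ a)) ⬝ᵥ (A *ᵥ (M⁻¹ *ᵥ a)) = ∑ k, (A *ᵥ (M⁻¹ *ᵥ a)) k ^ 2 := by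
        simp [dotProduct, sq]
      rw [h1, ← quad_form, ← hMdef, hMMv, dotProduct_comm]
    have hq : (0:ℝ) ≤ (Pi.single i 1 - A *ᵥ (M⁻¹ *ᵥ a)) ⬝ᵥ (Pi.single i 1 - A *ᵥ (M⁻¹ *ᵥ a)) :=
      Finset.sum_nonneg fun _ _ => mul_self_nonneg _
    have hexp : (Pi.single i 1 - A *ᵥ (M⁻¹ *ᵥ a)) ⬝ᵥ (Pi.single i 1 - A *ᵥ (M⁻¹ *ᵥ a))
        = 1 - γ := by
      rw [sub_dotProduct, dotProduct_sub, dotProduct_sub, single_dotProduct,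
        dotProduct_single, hpp, single_dotProduct, hpi, Pi.single_eq_same, ← hγdef]
      ring
    have h5 : (0:ℝ) ≤ 1 - γ := by rw [← hexp]; exact hq
    linarith
  have hβ2 : β ^ 2 ≤ α * γ := by
    have hq : ∀ t : ℝ, 0 ≤ γ * (t * t) + 2 * β * t + α := by
      intro t
      have h0 := hinv_nonneg (v + t • a)
      have e1 : (v + t • a) ⬝ᵥ (M⁻¹ *ᵥ (v + t • a)) = γ * (t * t) + 2 * β * t + α := by
        simp only [mulVec_add, mulVec_smul, dotProduct_add, add_dotProduct,
          dotProduct_smul, smul_dotProduct, smul_eq_mul, hsymm a v, ← hαdef, ← hβdef, ← hγdef]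
        ring
      rw [e1] at h0
      exact h0
    have hd := discrim_le_zero hq
    rw [discrim] at hd
    nlinarith
  -- final scalar inequality
  have hβw : β * w ≤ 1 := by
    nlinarith [mul_le_mul_of_nonneg_right hβ2 (sq_nonneg w),
      mul_le_mul_of_nonneg_left hγ1 (mul_nonneg hα0 (sq_nonneg w)),
      hαw, sq_nonneg (β * w - 1)]
  have hRw : ((1 + β) ^ 2 + α * (1 - γ)) * w ^ 2 ≤ (w + 1) ^ 2 := by
    nlinarith [mul_le_mul_of_nonneg_right hβ2 (sq_nonneg w),
      mul_le_mul_of_nonneg_left hβw (by positivity : (0:ℝ) ≤ 2 * w),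
      hαw, mul_le_mul_of_nonneg_left hγ1 (mul_nonneg hα0 (sq_nonneg w))]
  have hexp2 : (w + 1) ^ 2 ≤ w ^ 2 * Real.exp (2 / w) := by
    have e1 : 1 / w + 1 ≤ Real.exp (1 / w) := Real.add_one_le_exp _
    have e2 : w + 1 ≤ w * Real.exp (1 / w) := by
      have e4 : w * (1 / w + 1) ≤ w * Real.exp (1 / w) := mul_le_mul_of_nonneg_left e1 hw.le
      have e5 : w * (1 / w + 1) = w + 1 := by field_simp; ring
      rw [e5] at e4
      exact e4
    calc (w + 1) ^ 2 ≤ (w * Real.exp (1 / w)) ^ 2 := pow_le_pow_left₀ (by positivity) e2 2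
      _ = w ^ 2 * Real.exp (2 / w) := by
          rw [mul_pow, pow_two (Real.exp (1 / w)), ← Real.exp_add,
            show 1 / w + 1 / w = (2:ℝ) / w by ring]
  have hR : (1 + β) ^ 2 + α * (1 - γ) ≤ Real.exp (2 / w) := by
    have hw2 : (0:ℝ) < w ^ 2 := by positivity
    have h6 : ((1 + β) ^ 2 + α * (1 - γ)) * w ^ 2 ≤ Real.exp (2 / w) * w ^ 2 := by
      rw [mul_comm (Real.exp (2 / w)) (w ^ 2)]
      exact hRw.trans hexp2
    exact le_of_mul_le_mul_right h6 hw2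
  rw [hdet_eq, mul_comm (Real.exp (2 / w)) M.det]
  exact mul_le_mul_of_nonneg_left hR hdet.le

/-- Inequality (5): determinant ratio bound under a rank-one row perturbation, when all
singular values of `A` and `A' = A + e_i vᵀ` are at least `w`. -/
theorem det_ratio_bound {n d : ℕ} {w : ℝ} (hw : 0 < w)
    {A A' : Matrix (Fin n) (Fin d) ℝ} {i : Fin n} {v : Fin d → ℝ}
    (hv : ∑ j, v j ^ 2 = 1)
    (hA' : A' = A + Matrix.of fun k j => if k = i then v j else 0)
    (hAsv : ∀ x : Fin d → ℝ,
      w * Real.sqrt (∑ j, x j ^ 2) ≤ Real.sqrt (∑ k, (A *ᵥ x) k ^ 2))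
    (hA'sv : ∀ x : Fin d → ℝ,
      w * Real.sqrt (∑ j, x j ^ 2) ≤ Real.sqrt (∑ k, (A' *ᵥ x) k ^ 2)) :
    Real.exp (-2 / w) ≤ (A'ᵀ * A').det / (Aᵀ * A).det ∧
    (A'ᵀ * A').det / (Aᵀ * A).det ≤ Real.exp (2 / w) := by
  have hD : 0 < (Aᵀ * A).det := (posdef_of_sv hw hAsv).det_pos
  have hD' : 0 < (A'ᵀ * A').det := (posdef_of_sv hw hA'sv).det_pos
  have hup : (A'ᵀ * A').det ≤ Real.exp (2 / w) * (Aᵀ * A).det := key hw hv hA' hAsv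
  have hv' : ∑ j, (fun j => -v j) j ^ 2 = 1 := by simpa using hv
  have hA'' : A = A' + Matrix.of fun k j => if k = i then (fun j => -v j) j else 0 := by
    rw [hA']
    ext k j
    by_cases h : k = i <;> simp [h, Matrix.add_apply]
  have hlo : (Aᵀ * A).det ≤ Real.exp (2 / w) * (A'ᵀ * A').det := key hw hv' hA'' hA'sv
  have hEE : Real.exp (-2 / w) * Real.exp (2 / w) = 1 := by
    rw [← Real.exp_add, show -2 / w + 2 / w = (0:ℝ) by ring, Real.exp_zero]
  constructor
  · rw [le_div_iff₀ hD]
    have h1 : Real.exp (-2 / w) * (Aᵀ * A).det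
        ≤ Real.exp (-2 / w) * (Real.exp (2 / w) * (A'ᵀ * A').det) :=
      mul_le_mul_of_nonneg_left hlo (Real.exp_pos _).le
    rw [← mul_assoc, hEE, one_mul] at h1
    exact h1
  · rw [div_le_iff₀ hD]
    linarith
end
end

section
/- Pseudoinverse difference identity for a rank-one Laplacian update: Let L and L′ be real symmetric positive semidefinite n×n matrices with L′ = L + c·e_{ab}e_{ab}ᵀ for some c > 0 and some a ≠ b, where e_{ab} = e_a − e_b. Suppose the kernels of L and of L′ both equal the span of the all-ones vector. Let P and P′ be the Moore–Penrose pseudoinverses of L and L′. Then for every x ∈ ℝ^n orthogonal to the all-ones vector, xᵀPx − xᵀP′x = c·(xᵀP e_{ab})·(e_{ab}ᵀ P′ x). -/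
open Matrix

noncomputable section

/-- Uniqueness of the Moore–Penrose pseudoinverse. -/
theorem pinv_unique_aux {n : ℕ} {L P Q : Matrix (Fin n) (Fin n) ℝ}
    (hP : L * P * L = L ∧ P * L * P = P ∧ (L * P)ᵀ = L * P ∧ (P * L)ᵀ = P * L)
    (hQ : L * Q * L = L ∧ Q * L * Q = Q ∧ (L * Q)ᵀ = L * Q ∧ (Q * L)ᵀ = Q * L) :
    P = Q := by
  obtain ⟨hP1, hP2, hP3, hP4⟩ := hP
  obtain ⟨hQ1, hQ2, hQ3, hQ4⟩ := hQ
  have h1 : L * P = L * Q := by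
    calc L * P = (L * Q * L) * P := by rw [hQ1]
    _ = (L * Q) * (L * P) := by rw [mul_assoc]
    _ = (L * Q)ᵀ * (L * P)ᵀ := by rw [hQ3, hP3]
    _ = Qᵀ * (L * P * L)ᵀ := by
        simp only [Matrix.transpose_mul, mul_assoc]
    _ = Qᵀ * Lᵀ := by rw [hP1]
    _ = (L * Q)ᵀ := by rw [Matrix.transpose_mul]
    _ = L * Q := hQ3
  have h2 : P * L = Q * L := by
    calc P * L = P * (L * Q * L) := by rw [hQ1]
    _ = (P * L) * (Q * L) := by simp only [mul_assoc]
    _ = (P * L)ᵀ * (Q * L)ᵀ := by rw [hQ4, hP4]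
    _ = (L * P * L)ᵀ * Qᵀ := by
        simp only [Matrix.transpose_mul, mul_assoc]
    _ = Lᵀ * Qᵀ := by rw [hP1]
    _ = (Q * L)ᵀ := by rw [Matrix.transpose_mul]
    _ = Q * L := hQ4
  calc P = P * L * P := hP2.symm
  _ = P * (L * Q) := by rw [mul_assoc, h1]
  _ = (Q * L) * Q := by rw [← mul_assoc, h2]
  _ = Q := hQ2

/-- Pseudoinverse difference identity for a rank-one Laplacian update
`L' = L + c·e_{ab}e_{ab}ᵀ`, when both kernels equal the span of the all-ones vector:
for `x ⊥ 𝟙`, `xᵀPx − xᵀP'x = c·(xᵀP e_{ab})·(e_{ab}ᵀ P' x)`. -/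
theorem pseudoinverse_difference_rank_one {n : ℕ} {L L' P P' : Matrix (Fin n) (Fin n) ℝ}
    (hL : L.PosSemidef) (hL' : L'.PosSemidef)
    {c : ℝ} (hc : 0 < c) {a b : Fin n} (hab : a ≠ b)
    (hL'def : L' = L + c • Matrix.vecMulVec
      (Pi.single a 1 - Pi.single b 1) (Pi.single a 1 - Pi.single b 1))
    (hker : ∀ x : Fin n → ℝ, L *ᵥ x = 0 ↔ ∃ t : ℝ, x = fun _ => t)
    (hker' : ∀ x : Fin n → ℝ, L' *ᵥ x = 0 ↔ ∃ t : ℝ, x = fun _ => t)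
    (hP : L * P * L = L ∧ P * L * P = P ∧ (L * P)ᵀ = L * P ∧ (P * L)ᵀ = P * L)
    (hP' : L' * P' * L' = L' ∧ P' * L' * P' = P' ∧ (L' * P')ᵀ = L' * P' ∧ (P' * L')ᵀ = P' * L')
    (x : Fin n → ℝ) (hx : (x ⬝ᵥ fun _ => (1 : ℝ)) = 0) :
    x ⬝ᵥ (P *ᵥ x) - x ⬝ᵥ (P' *ᵥ x)
      = c * (x ⬝ᵥ (P *ᵥ (Pi.single a 1 - Pi.single b 1)))
          * ((Pi.single a 1 - Pi.single b 1) ⬝ᵥ (P' *ᵥ x)) := by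
  set e : Fin n → ℝ := Pi.single a 1 - Pi.single b 1 with he
  -- symmetry of L, L'
  have hLs : Lᵀ = L := by
    have := hL.1
    rwa [Matrix.IsHermitian, Matrix.conjTranspose_eq_transpose_of_trivial] at this
  have hL's : L'ᵀ = L' := by
    have := hL'.1
    rwa [Matrix.IsHermitian, Matrix.conjTranspose_eq_transpose_of_trivial] at this
  -- P is symmetric
  have hPs : Pᵀ = P := by
    refine pinv_unique_aux (L := L) ?_ hP
    obtain ⟨h1, h2, h3, h4⟩ := hP
    refine ⟨?_, ?_, ?_, ?_⟩
    · have := congrArg Matrix.transpose h1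
      simpa [Matrix.transpose_mul, hLs, mul_assoc] using this
    · have := congrArg Matrix.transpose h2
      simpa [Matrix.transpose_mul, hLs, mul_assoc] using this
    · calc (L * Pᵀ)ᵀ = P * Lᵀ := by rw [Matrix.transpose_mul, Matrix.transpose_transpose]
      _ = P * L := by rw [hLs]
      _ = (P * L)ᵀ := h4.symm
      _ = Lᵀ * Pᵀ := by rw [Matrix.transpose_mul]
      _ = L * Pᵀ := by rw [hLs]
    · calc (Pᵀ * L)ᵀ = Lᵀ * P := by rw [Matrix.transpose_mul, Matrix.transpose_transpose]
      _ = L * P := by rw [hLs]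
      _ = (L * P)ᵀ := h3.symm
      _ = Pᵀ * Lᵀ := by rw [Matrix.transpose_mul]
      _ = Pᵀ * L := by rw [hLs]
  -- L kills ones, so ones ᵥ* P = 0
  have hones : L *ᵥ (fun _ => (1:ℝ)) = 0 := (hker _).2 ⟨1, rfl⟩
  have hones' : L' *ᵥ (fun _ => (1:ℝ)) = 0 := (hker' _).2 ⟨1, rfl⟩
  have honesP : ∀ (M N : Matrix (Fin n) (Fin n) ℝ),
      M * N * M = M → N * M * N = N → (N * M)ᵀ = N * M →
      M *ᵥ (fun _ => (1:ℝ)) = 0 → (fun _ => (1:ℝ)) ᵥ* N = 0 := by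
    intro M N h1 h2 h4 h0
    have hNM : (fun _ => (1:ℝ)) ᵥ* (N * M) = 0 := by
      rw [← h4, Matrix.vecMul_transpose, ← Matrix.mulVec_mulVec, h0, Matrix.mulVec_zero]
    calc (fun _ => (1:ℝ)) ᵥ* N = (fun _ => (1:ℝ)) ᵥ* (N * M * N) := by rw [h2]
    _ = ((fun _ => (1:ℝ)) ᵥ* (N * M)) ᵥ* N := by rw [Matrix.vecMul_vecMul]
    _ = 0 := by rw [hNM, Matrix.zero_vecMul]
  have h1P : (fun _ => (1:ℝ)) ᵥ* P = 0 := honesP L P hP.1 hP.2.1 hP.2.2.2 hones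
  have h1P' : (fun _ => (1:ℝ)) ᵥ* P' = 0 := honesP L' P' hP'.1 hP'.2.1 hP'.2.2.2 hones'
  -- LPx = x + t • ones
  have hproj : ∀ (M N : Matrix (Fin n) (Fin n) ℝ), M * N * M = M → Mᵀ = M →
      (M * N)ᵀ = M * N →
      (∀ y : Fin n → ℝ, M *ᵥ y = 0 ↔ ∃ t : ℝ, y = fun _ => t) →
      ∃ t : ℝ, M *ᵥ (N *ᵥ x) = x + (fun _ => t) := by
    intro M N h1 hMs hMNs hk
    have hMMN : M * (M * N) = M := by
      calc M * (M * N) = Mᵀ * (M * N)ᵀ := by rw [hMs, hMNs]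
      _ = ((M * N) * M)ᵀ := (Matrix.transpose_mul _ _).symm
      _ = Mᵀ := by rw [h1]
      _ = M := hMs
    have : M *ᵥ (M *ᵥ (N *ᵥ x) - x) = 0 := by
      rw [Matrix.mulVec_sub, Matrix.mulVec_mulVec, Matrix.mulVec_mulVec, mul_assoc, hMMN, sub_self]
    obtain ⟨t, ht⟩ := (hk _).1 this
    exact ⟨t, by rw [← ht]; abel⟩
  obtain ⟨t, ht⟩ := hproj L P hP.1 hLs hP.2.2.1 hker
  obtain ⟨s, hs⟩ := hproj L' P' hP'.1 hL's hP'.2.2.1 hker'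
  set u : Fin n → ℝ := P *ᵥ x with hu
  set u' : Fin n → ℝ := P' *ᵥ x with hu'
  have honesu : (fun _ => (1:ℝ)) ⬝ᵥ u = 0 := by
    rw [hu, dotProduct_mulVec, h1P, zero_dotProduct]
  have honesu' : (fun _ => (1:ℝ)) ⬝ᵥ u' = 0 := by
    rw [hu', dotProduct_mulVec, h1P', zero_dotProduct]
  -- symmetric-matrix dot swap
  have hswap : ∀ (M : Matrix (Fin n) (Fin n) ℝ), Mᵀ = M → ∀ v w : Fin n → ℝ,
      (M *ᵥ v) ⬝ᵥ w = v ⬝ᵥ (M *ᵥ w) := by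
    intro M hM v w
    rw [dotProduct_comm, dotProduct_mulVec, ← Matrix.mulVec_transpose, hM, dotProduct_comm]
  -- rank-one action
  have hrank : ∀ v : Fin n → ℝ, (Matrix.vecMulVec e e) *ᵥ v = (e ⬝ᵥ v) • e := by
    intro v
    ext i
    simp only [Matrix.mulVec, Matrix.vecMulVec_apply, dotProduct, Pi.smul_apply, smul_eq_mul,
      Matrix.of_apply]
    rw [Finset.sum_mul]
    exact Finset.sum_congr rfl (fun j _ => by ring)
  -- main computation
  have key1 : x ⬝ᵥ u = u' ⬝ᵥ (L *ᵥ u) + c * (e ⬝ᵥ u) * (e ⬝ᵥ u') := by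
    have hxe : x = L' *ᵥ u' - (fun _ => s) := by rw [hs]; abel
    calc x ⬝ᵥ u = (L' *ᵥ u') ⬝ᵥ u - (fun _ => s) ⬝ᵥ u := by
          rw [hxe, sub_dotProduct]
    _ = (L' *ᵥ u') ⬝ᵥ u - s * ((fun _ => (1:ℝ)) ⬝ᵥ u) := by
          congr 1
          simp [dotProduct, Finset.mul_sum]
    _ = u' ⬝ᵥ (L' *ᵥ u) := by rw [honesu, mul_zero, sub_zero, hswap L' hL's]
    _ = u' ⬝ᵥ (L *ᵥ u) + c * (e ⬝ᵥ u) * (e ⬝ᵥ u') := by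
          rw [hL'def, Matrix.add_mulVec, dotProduct_add, Matrix.smul_mulVec, hrank]
          simp only [dotProduct_smul, smul_eq_mul]
          rw [dotProduct_comm u' e]
          ring
  have key2 : x ⬝ᵥ u' = u' ⬝ᵥ (L *ᵥ u) := by
    have hxe : x = L *ᵥ u - (fun _ => t) := by rw [ht]; abel
    calc x ⬝ᵥ u' = (L *ᵥ u) ⬝ᵥ u' - (fun _ => t) ⬝ᵥ u' := by
          rw [hxe, sub_dotProduct]
    _ = (L *ᵥ u) ⬝ᵥ u' - t * ((fun _ => (1:ℝ)) ⬝ᵥ u') := by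
          congr 1
          simp [dotProduct, Finset.mul_sum]
    _ = (L *ᵥ u) ⬝ᵥ u' := by rw [honesu', mul_zero, sub_zero]
    _ = u ⬝ᵥ (L *ᵥ u') := hswap L hLs u u'
    _ = (L *ᵥ u') ⬝ᵥ u := dotProduct_comm _ _
    _ = u' ⬝ᵥ (L *ᵥ u) := hswap L hLs u' u
  have hxPe : x ⬝ᵥ (P *ᵥ e) = e ⬝ᵥ u := by
    rw [hu, dotProduct_mulVec x P e, ← Matrix.mulVec_transpose, hPs, dotProduct_comm]
  rw [key1, key2, hxPe]
  ring
end
end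

section
/- Norm comparison for shifted Gram square roots (Stage 2 lemma): Let w > 0, let A be an n×d real matrix, let A′ = A + e_i vᵀ for some index i and some v ∈ ℝ^d with ‖v‖₂ ≤ 1, and set B = (AᵀA + w²·I_d)^{1/2} and B′ = (A′ᵀA′ + w²·I_d)^{1/2}. Then for every z ∈ ℝ^d, ‖Bz‖₂ ≤ ‖B′z‖₂ + ‖z‖₂ ≤ (1 + 1/w)·‖B′z‖₂, and symmetrically ‖B′z‖₂ ≤ (1 + 1/w)·‖Bz‖₂. -/
open Matrix

noncomputable section

private theorem sqrt_sum_sq_add_le' {m : ℕ} (x y : Fin m → ℝ) :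
    Real.sqrt (∑ k, (x k + y k) ^ 2)
      ≤ Real.sqrt (∑ k, x k ^ 2) + Real.sqrt (∑ k, y k ^ 2) := by
  have := norm_add_le ((EuclideanSpace.equiv (Fin m) ℝ).symm x)
    ((EuclideanSpace.equiv (Fin m) ℝ).symm y)
  simpa [EuclideanSpace.norm_eq, Real.norm_eq_abs, sq_abs] using this

private theorem quadId' {n d : ℕ} {w : ℝ} {A : Matrix (Fin n) (Fin d) ℝ}
    {B : Matrix (Fin d) (Fin d) ℝ} (hB : B.PosSemidef)
    (hB2 : B * B = Aᵀ * A + (w ^ 2) • (1 : Matrix (Fin d) (Fin d) ℝ)) (z : Fin d → ℝ) :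
    ∑ k, (B *ᵥ z) k ^ 2 = ∑ k, (A *ᵥ z) k ^ 2 + w ^ 2 * ∑ j, z j ^ 2 := by
  have hBt : Bᵀ = B := by
    have := hB.1
    rwa [Matrix.IsHermitian, conjTranspose_eq_transpose_of_trivial] at this
  have key : (B *ᵥ z) ⬝ᵥ (B *ᵥ z) = (A *ᵥ z) ⬝ᵥ (A *ᵥ z) + w ^ 2 * (z ⬝ᵥ z) := by
    rw [Matrix.dotProduct_mulVec, ← Matrix.mulVec_transpose, hBt, Matrix.mulVec_mulVec, hB2,
      Matrix.add_mulVec, Matrix.smul_mulVec, Matrix.one_mulVec, add_dotProduct,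
      smul_dotProduct, ← Matrix.mulVec_mulVec, Matrix.mulVec_transpose,
      ← Matrix.dotProduct_mulVec, smul_eq_mul, dotProduct_comm]
  simpa [dotProduct, sq] using key

set_option maxHeartbeats 1600000 in
/-- Stage 2 lemma: norm comparison for the shifted Gram square roots
`B = (AᵀA + w²I)^{1/2}` and `B' = (A'ᵀA' + w²I)^{1/2}` where `A' = A + e_i vᵀ`, `‖v‖₂ ≤ 1`. -/
theorem shifted_gram_sqrt_norm_comparison {n d : ℕ} {w : ℝ} (hw : 0 < w)
    {A A' : Matrix (Fin n) (Fin d) ℝ} {i : Fin n} {v : Fin d → ℝ}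
    (hv : Real.sqrt (∑ j, v j ^ 2) ≤ 1)
    (hA' : A' = A + Matrix.of fun k j => if k = i then v j else 0)
    {B B' : Matrix (Fin d) (Fin d) ℝ}
    (hB : B.PosSemidef)
    (hB2 : B * B = Aᵀ * A + (w ^ 2) • (1 : Matrix (Fin d) (Fin d) ℝ))
    (hB' : B'.PosSemidef)
    (hB'2 : B' * B' = A'ᵀ * A' + (w ^ 2) • (1 : Matrix (Fin d) (Fin d) ℝ))
    (z : Fin d → ℝ) :
    (Real.sqrt (∑ k, (B *ᵥ z) k ^ 2)
        ≤ Real.sqrt (∑ k, (B' *ᵥ z) k ^ 2) + Real.sqrt (∑ j, z j ^ 2) ∧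
      Real.sqrt (∑ k, (B' *ᵥ z) k ^ 2) + Real.sqrt (∑ j, z j ^ 2)
        ≤ (1 + 1 / w) * Real.sqrt (∑ k, (B' *ᵥ z) k ^ 2)) ∧
    Real.sqrt (∑ k, (B' *ᵥ z) k ^ 2) ≤ (1 + 1 / w) * Real.sqrt (∑ k, (B *ᵥ z) k ^ 2) := by
  set b := Real.sqrt (∑ k, (B *ᵥ z) k ^ 2) with hbdef
  set b' := Real.sqrt (∑ k, (B' *ᵥ z) k ^ 2) with hb'def
  set s := Real.sqrt (∑ j, z j ^ 2) with hsdef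
  set a := Real.sqrt (∑ k, (A *ᵥ z) k ^ 2) with hadef
  set a' := Real.sqrt (∑ k, (A' *ᵥ z) k ^ 2) with ha'def
  have hsa : (0:ℝ) ≤ ∑ k, (A *ᵥ z) k ^ 2 := Finset.sum_nonneg fun _ _ => sq_nonneg _
  have hsa' : (0:ℝ) ≤ ∑ k, (A' *ᵥ z) k ^ 2 := Finset.sum_nonneg fun _ _ => sq_nonneg _
  have hss : (0:ℝ) ≤ ∑ j, z j ^ 2 := Finset.sum_nonneg fun _ _ => sq_nonneg _
  have hb0 : 0 ≤ b := Real.sqrt_nonneg _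
  have hb'0 : 0 ≤ b' := Real.sqrt_nonneg _
  have hs0 : 0 ≤ s := Real.sqrt_nonneg _
  have ha0 : 0 ≤ a := Real.sqrt_nonneg _
  have ha'0 : 0 ≤ a' := Real.sqrt_nonneg _
  -- quadratic identities
  have hq : ∑ k, (B *ᵥ z) k ^ 2 = ∑ k, (A *ᵥ z) k ^ 2 + w ^ 2 * ∑ j, z j ^ 2 :=
    quadId' hB hB2 z
  have hq' : ∑ k, (B' *ᵥ z) k ^ 2 = ∑ k, (A' *ᵥ z) k ^ 2 + w ^ 2 * ∑ j, z j ^ 2 :=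
    quadId' hB' hB'2 z
  have hb2 : b ^ 2 = a ^ 2 + w ^ 2 * s ^ 2 := by
    rw [hbdef, hadef, hsdef, Real.sq_sqrt (by positivity), Real.sq_sqrt hsa,
      Real.sq_sqrt hss, hq]
  have hb'2 : b' ^ 2 = a' ^ 2 + w ^ 2 * s ^ 2 := by
    rw [hb'def, ha'def, hsdef, Real.sq_sqrt (by positivity), Real.sq_sqrt hsa',
      Real.sq_sqrt hss, hq']
  -- Cauchy-Schwarz: |v ⬝ z| ≤ s
  have hvz : (∑ j, v j * z j) ^ 2 ≤ s ^ 2 := by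
    calc (∑ j, v j * z j) ^ 2 ≤ (∑ j, v j ^ 2) * (∑ j, z j ^ 2) :=
          Finset.sum_mul_sq_le_sq_mul_sq _ _ _
      _ ≤ 1 * (∑ j, z j ^ 2) := by
          apply mul_le_mul_of_nonneg_right _ hss
          calc ∑ j, v j ^ 2 = Real.sqrt (∑ j, v j ^ 2) ^ 2 := (Real.sq_sqrt (by positivity)).symm
            _ ≤ 1 ^ 2 := by
                apply pow_le_pow_left₀ (Real.sqrt_nonneg _) hv
            _ = 1 := one_pow _
      _ = s ^ 2 := by rw [hsdef, Real.sq_sqrt hss, one_mul]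
  -- perturbation vector
  have hA'z : A' *ᵥ z = fun k => (A *ᵥ z) k + (if k = i then ∑ j, v j * z j else 0) := by
    funext k
    by_cases hk : k = i <;>
      simp [hA', Matrix.mulVec, dotProduct, hk, add_mul, Finset.sum_add_distrib]
  have hptsum : ∑ k : Fin n, (if k = i then ∑ j, v j * z j else 0) ^ 2
      = (∑ j, v j * z j) ^ 2 := by
    rw [Finset.sum_eq_single i]
    · simp
    · intro k _ hk; simp [hk]
    · intro h; simp at h
  -- triangle inequalities
  have htri1 : a' ≤ a + s := by
    calc a' = Real.sqrt (∑ k, ((A *ᵥ z) k + (if k = i then ∑ j, v j * z j else 0)) ^ 2) := by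
          rw [ha'def, hA'z]
      _ ≤ a + Real.sqrt (∑ k : Fin n, (if k = i then ∑ j, v j * z j else 0) ^ 2) :=
          sqrt_sum_sq_add_le' _ _
      _ ≤ a + s := by
          gcongr
          rw [hptsum]
          calc Real.sqrt ((∑ j, v j * z j) ^ 2) ≤ Real.sqrt (s ^ 2) :=
                Real.sqrt_le_sqrt hvz
            _ = s := Real.sqrt_sq hs0
  have htri2 : a ≤ a' + s := by
    have : (fun k => (A *ᵥ z) k) =
        fun k => (A' *ᵥ z) k + (if k = i then -(∑ j, v j * z j) else 0) := by
      funext k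
      rw [hA'z]
      by_cases hk : k = i <;> simp [hk]
    calc a = Real.sqrt (∑ k, ((A' *ᵥ z) k + (if k = i then -(∑ j, v j * z j) else 0)) ^ 2) := by
          rw [hadef]; congr 1; apply Finset.sum_congr rfl; intro k _
          rw [show (A *ᵥ z) k = (A' *ᵥ z) k + (if k = i then -(∑ j, v j * z j) else 0) from
            congrFun this k]
      _ ≤ a' + Real.sqrt (∑ k : Fin n, (if k = i then -(∑ j, v j * z j) else 0) ^ 2) :=
          sqrt_sum_sq_add_le' _ _
      _ ≤ a' + s := by
          gcongr
          have : ∑ k : Fin n, (if k = i then -(∑ j, v j * z j) else 0) ^ 2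
              = (∑ j, v j * z j) ^ 2 := by
            rw [← hptsum]
            apply Finset.sum_congr rfl; intro k _
            by_cases hk : k = i <;> simp [hk]
          rw [this]
          calc Real.sqrt ((∑ j, v j * z j) ^ 2) ≤ Real.sqrt (s ^ 2) :=
                Real.sqrt_le_sqrt hvz
            _ = s := Real.sqrt_sq hs0
  have hab : a ≤ b :=
    le_of_pow_le_pow_left₀ two_ne_zero hb0 (by nlinarith [sq_nonneg w, sq_nonneg s])
  have ha'b' : a' ≤ b' :=
    le_of_pow_le_pow_left₀ two_ne_zero hb'0 (by nlinarith [sq_nonneg w, sq_nonneg s])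
  have hwsb : w * s ≤ b :=
    le_of_pow_le_pow_left₀ two_ne_zero hb0 (by nlinarith [sq_nonneg a])
  have hwsb' : w * s ≤ b' :=
    le_of_pow_le_pow_left₀ two_ne_zero hb'0 (by nlinarith [sq_nonneg a'])
  have main1 : b ≤ b' + s :=
    le_of_pow_le_pow_left₀ two_ne_zero (by positivity)
      (by nlinarith [mul_nonneg ha'0 hs0, mul_nonneg hb'0 hs0, mul_nonneg ha0 hs0,
        sq_nonneg (a - a'), sq_nonneg s])
  have main3 : b' ≤ b + s :=
    le_of_pow_le_pow_left₀ two_ne_zero (by positivity)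
      (by nlinarith [mul_nonneg ha'0 hs0, mul_nonneg hb0 hs0, mul_nonneg ha0 hs0,
        sq_nonneg (a - a'), sq_nonneg s])
  have hsb' : s ≤ (1 / w) * b' := by
    rw [div_mul_eq_mul_div, le_div_iff₀ hw, mul_comm]
    simpa [mul_comm] using hwsb'
  have hsb : s ≤ (1 / w) * b := by
    rw [div_mul_eq_mul_div, le_div_iff₀ hw, mul_comm]
    simpa [mul_comm] using hwsb
  refine ⟨⟨main1, ?_⟩, ?_⟩
  · have : (1 + 1 / w) * b' = b' + (1 / w) * b' := by ring
    rw [this]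
    linarith
  · have : (1 + 1 / w) * b = b + (1 / w) * b := by ring
    rw [this]
    linarith
end
end

section
/- Tail bound for the product of two Gaussian linear forms: Let m be a positive integer, u, v ∈ ℝ^m, δ ∈ (0,1), and let γ_m be the standard Gaussian measure on ℝ^m. Then γ_m{ y ∈ ℝ^m : |⟨u,y⟩·⟨v,y⟩| > 2·ln(4/δ)·‖u‖₂·‖v‖₂ } ≤ δ. -/
open MeasureTheory ProbabilityTheory Matrix

noncomputable section

open Real


lemma gauss_fun_eq (c x : ℝ) :
    gaussianPDFReal 0 1 x * rexp (c * x)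
      = (Real.sqrt (2 * Real.pi))⁻¹ * rexp (c ^ 2 / 2) * rexp (-(1/2) * (x - c) ^ 2) := by
  simp only [gaussianPDFReal, NNReal.coe_one, mul_one, sub_zero]
  rw [mul_assoc, ← Real.exp_add, mul_assoc, ← Real.exp_add]
  congr 2
  ring

lemma integrable_aux (c : ℝ) :
    Integrable (fun x => (Real.sqrt (2 * Real.pi))⁻¹ * rexp (c ^ 2 / 2)
      * rexp (-(1/2) * (x - c) ^ 2)) := by
  apply Integrable.const_mul
  exact ((integrable_exp_neg_mul_sq (by norm_num : (0:ℝ) < 1/2)).comp_sub_right c)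

lemma integrable_exp_mul_stdGaussian (c : ℝ) :
    Integrable (fun x => rexp (c * x)) (gaussianReal 0 1) := by
  rw [gaussianReal_of_var_ne_zero _ one_ne_zero]
  have hmeas : Measurable (fun x => (gaussianPDFReal 0 1 x).toNNReal) :=
    measurable_real_toNNReal.comp (measurable_gaussianPDFReal 0 1)
  have : (volume.withDensity (gaussianPDF 0 1))
      = volume.withDensity (fun x => ((gaussianPDFReal 0 1 x).toNNReal : ENNReal)) := rfl
  rw [this, integrable_withDensity_iff_integrable_smul hmeas]
  have : (fun x => (gaussianPDFReal 0 1 x).toNNReal • rexp (c * x))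
      = fun x => (Real.sqrt (2 * Real.pi))⁻¹ * rexp (c ^ 2 / 2) * rexp (-(1/2) * (x - c) ^ 2) := by
    funext x
    rw [NNReal.smul_def, Real.coe_toNNReal _ (gaussianPDFReal_nonneg 0 1 x)]
    exact gauss_fun_eq c x
  rw [this]
  exact integrable_aux c

lemma integral_exp_mul_stdGaussian (c : ℝ) :
    ∫ x, rexp (c * x) ∂(gaussianReal 0 1) = rexp (c ^ 2 / 2) := by
  rw [gaussianReal_of_var_ne_zero _ one_ne_zero]
  have hmeas : Measurable (fun x => (gaussianPDFReal 0 1 x).toNNReal) :=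
    measurable_real_toNNReal.comp (measurable_gaussianPDFReal 0 1)
  have h0 : (volume.withDensity (gaussianPDF 0 1))
      = volume.withDensity (fun x => ((gaussianPDFReal 0 1 x).toNNReal : ENNReal)) := rfl
  rw [h0, integral_withDensity_eq_integral_smul hmeas]
  have h1 : (fun x => (gaussianPDFReal 0 1 x).toNNReal • rexp (c * x))
      = fun x => (Real.sqrt (2 * Real.pi))⁻¹ * rexp (c ^ 2 / 2) * rexp (-(1/2) * (x - c) ^ 2) := by
    funext x
    rw [NNReal.smul_def, Real.coe_toNNReal _ (gaussianPDFReal_nonneg 0 1 x)]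
    exact gauss_fun_eq c x
  rw [h1, integral_const_mul,
    integral_sub_right_eq_self (fun x => rexp (-(1/2) * x ^ 2)) c]
  rw [integral_gaussian]
  have h2 : Real.sqrt (Real.pi / (1/2)) = Real.sqrt (2 * Real.pi) := by
    congr 1; ring
  rw [h2, mul_comm ((Real.sqrt (2 * Real.pi))⁻¹) _, mul_assoc,
    inv_mul_cancel₀ (by positivity : Real.sqrt (2 * Real.pi) ≠ 0), mul_one]

def gms : MeasureSpace ℝ := ⟨gaussianReal 0 1⟩

lemma exp_dot_eq {m : ℕ} (w : Fin m → ℝ) (t : ℝ) (y : Fin m → ℝ) :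
    rexp (t * (w ⬝ᵥ y)) = ∏ i, rexp ((t * w i) * y i) := by
  rw [← Real.exp_sum]
  congr 1
  simp only [dotProduct, Finset.mul_sum]
  exact Finset.sum_congr rfl fun i _ => by ring

lemma integrable_exp_dot {m : ℕ} (w : Fin m → ℝ) (t : ℝ) :
    Integrable (fun y => rexp (t * (w ⬝ᵥ y))) (stdGaussianPi (Fin m)) := by
  simp only [exp_dot_eq]
  exact Integrable.fintype_prod (f := fun i x => rexp ((t * w i) * x))
    (μ := fun _ => gaussianReal 0 1)
    (fun i => integrable_exp_mul_stdGaussian _)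

lemma integral_exp_dot {m : ℕ} (w : Fin m → ℝ) (t : ℝ) :
    ∫ y, rexp (t * (w ⬝ᵥ y)) ∂(stdGaussianPi (Fin m))
      = rexp (t ^ 2 * (∑ i, w i ^ 2) / 2) := by
  simp only [exp_dot_eq]
  have key : ∫ y, ∏ i, rexp ((t * w i) * y i) ∂(stdGaussianPi (Fin m))
      = ∏ i, ∫ x, rexp ((t * w i) * x) ∂(gaussianReal 0 1) :=
    integral_fintype_prod_eq_prod (E := fun _ => ℝ)
      (fun i x => rexp ((t * w i) * x)) (μ := fun _ => gaussianReal 0 1)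
  rw [key]
  simp only [integral_exp_mul_stdGaussian, ← Real.exp_sum]
  congr 1
  rw [Finset.mul_sum, Finset.sum_div]
  exact Finset.sum_congr rfl fun i _ => by ring

instance inst_s17 (ι : Type*) [Fintype ι] : IsProbabilityMeasure (stdGaussianPi ι) := by
  unfold stdGaussianPi; infer_instance

lemma gaussian_dot_tail_one {m : ℕ} (w : Fin m → ℝ) (hS : 0 < ∑ i, w i ^ 2)
    {L : ℝ} (hL : 0 < L) :
    stdGaussianPi (Fin m) {y | Real.sqrt (2 * L) * Real.sqrt (∑ i, w i ^ 2) ≤ w ⬝ᵥ y}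
      ≤ ENNReal.ofReal (rexp (-L)) := by
  set S := ∑ i, w i ^ 2 with hSdef
  set a : ℝ := Real.sqrt (2 * L) * Real.sqrt S with ha
  set t : ℝ := Real.sqrt (2 * L) / Real.sqrt S with ht
  have hssne : Real.sqrt S ≠ 0 := by positivity
  have htpos : 0 ≤ t := by positivity
  have cher := measure_ge_le_exp_mul_mgf (μ := stdGaussianPi (Fin m))
    (X := fun y => w ⬝ᵥ y) a htpos (integrable_exp_dot w t)
  have hmgf : mgf (fun y => w ⬝ᵥ y) (stdGaussianPi (Fin m)) t
      = rexp (t ^ 2 * S / 2) := integral_exp_dot w t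
  rw [hmgf, ← Real.exp_add] at cher
  have h1 : t * a = 2 * L := by
    have : t * a = Real.sqrt (2 * L) * Real.sqrt (2 * L) * (Real.sqrt S / Real.sqrt S) := by
      rw [ht, ha]; ring
    rw [this, div_self hssne, mul_one, Real.mul_self_sqrt (by linarith)]
  have h2 : t ^ 2 * S / 2 = L := by
    have hS2 : Real.sqrt S ^ 2 = S := Real.sq_sqrt hS.le
    have h2l : Real.sqrt (2 * L) ^ 2 = 2 * L := Real.sq_sqrt (by linarith)
    have : t ^ 2 * S / 2 = Real.sqrt (2 * L) ^ 2 * (S / Real.sqrt S ^ 2) / 2 := by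
      rw [ht]; ring
    rw [this, hS2, div_self hS.ne', mul_one, h2l]; ring
  have h3 : -t * a + t ^ 2 * S / 2 = -L := by
    rw [h2, neg_mul, h1]; ring
  rw [h3] at cher
  exact (ENNReal.le_ofReal_iff_toReal_le (measure_ne_top _ _) (Real.exp_pos _).le).mpr cher

/-- Tail bound for the product of two Gaussian linear forms:
`γ_m { y : |⟨u,y⟩·⟨v,y⟩| > 2·ln(4/δ)·‖u‖·‖v‖ } ≤ δ`. -/
theorem gaussian_bilinear_tail_bound {m : ℕ} (hm : 0 < m) (u v : Fin m → ℝ)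
    {δ : ℝ} (hδ : 0 < δ ∧ δ < 1) :
    stdGaussianPi (Fin m)
      {y : Fin m → ℝ |
        2 * Real.log (4 / δ) * Real.sqrt (∑ i, u i ^ 2) * Real.sqrt (∑ i, v i ^ 2)
          < |(u ⬝ᵥ y) * (v ⬝ᵥ y)|}
    ≤ ENNReal.ofReal δ := by
  obtain ⟨hδ0, hδ1⟩ := hδ
  set L : ℝ := Real.log (4 / δ) with hLdef
  have hL : 0 < L := Real.log_pos (by rw [lt_div_iff₀ hδ0]; linarith)
  have hexp : rexp (-L) = δ / 4 := by
    rw [Real.exp_neg, Real.exp_log (by positivity), inv_div]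
  -- degenerate cases
  rcases eq_or_lt_of_le (Finset.sum_nonneg fun i _ => sq_nonneg (u i)) with hSu | hSu
  · have hu0 : ∀ i, u i = 0 := fun i => pow_eq_zero_iff two_ne_zero |>.mp
      ((Finset.sum_eq_zero_iff_of_nonneg fun i _ => sq_nonneg (u i)).mp hSu.symm i
        (Finset.mem_univ i))
    have hset : {y : Fin m → ℝ |
        2 * L * Real.sqrt (∑ i, u i ^ 2) * Real.sqrt (∑ i, v i ^ 2)
          < |(u ⬝ᵥ y) * (v ⬝ᵥ y)|} = ∅ := by
      ext y
      simp [dotProduct, hu0, ← hSu]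
    rw [hset]
    simp
  rcases eq_or_lt_of_le (Finset.sum_nonneg fun i _ => sq_nonneg (v i)) with hSv | hSv
  · have hv0 : ∀ i, v i = 0 := fun i => pow_eq_zero_iff two_ne_zero |>.mp
      ((Finset.sum_eq_zero_iff_of_nonneg fun i _ => sq_nonneg (v i)).mp hSv.symm i
        (Finset.mem_univ i))
    have hset : {y : Fin m → ℝ |
        2 * L * Real.sqrt (∑ i, u i ^ 2) * Real.sqrt (∑ i, v i ^ 2)
          < |(u ⬝ᵥ y) * (v ⬝ᵥ y)|} = ∅ := by
      ext y
      have hvy : v ⬝ᵥ y = 0 := by simp [dotProduct, hv0]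
      simp [hvy, ← hSv]
    rw [hset]
    simp
  -- main case
  set a : ℝ := Real.sqrt (2 * L) * Real.sqrt (∑ i, u i ^ 2) with ha
  set b : ℝ := Real.sqrt (2 * L) * Real.sqrt (∑ i, v i ^ 2) with hb
  have hsub : {y : Fin m → ℝ |
        2 * L * Real.sqrt (∑ i, u i ^ 2) * Real.sqrt (∑ i, v i ^ 2)
          < |(u ⬝ᵥ y) * (v ⬝ᵥ y)|}
      ⊆ ({y | a ≤ u ⬝ᵥ y} ∪ {y | a ≤ (-u) ⬝ᵥ y}) ∪
        ({y | b ≤ v ⬝ᵥ y} ∪ {y | b ≤ (-v) ⬝ᵥ y}) := by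
    intro y hy
    have key : a ≤ |u ⬝ᵥ y| ∨ b ≤ |v ⬝ᵥ y| := by
      by_contra h
      push_neg at h
      have hab : |(u ⬝ᵥ y) * (v ⬝ᵥ y)|
          ≤ 2 * L * Real.sqrt (∑ i, u i ^ 2) * Real.sqrt (∑ i, v i ^ 2) := by
        rw [abs_mul]
        calc |u ⬝ᵥ y| * |v ⬝ᵥ y| ≤ a * b :=
              mul_le_mul h.1.le h.2.le (abs_nonneg _) (by positivity)
          _ = (Real.sqrt (2 * L) * Real.sqrt (2 * L))
              * (Real.sqrt (∑ i, u i ^ 2) * Real.sqrt (∑ i, v i ^ 2)) := by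
              rw [ha, hb]; ring
          _ = 2 * L * Real.sqrt (∑ i, u i ^ 2) * Real.sqrt (∑ i, v i ^ 2) := by
              rw [Real.mul_self_sqrt (by linarith)]; ring
      exact absurd hy (not_lt.mpr hab)
    simp only [Set.mem_union, Set.mem_setOf_eq, neg_dotProduct]
    rcases key with h | h
    · rcases le_abs.mp h with h' | h'
      · exact Or.inl (Or.inl h')
      · exact Or.inl (Or.inr h')
    · rcases le_abs.mp h with h' | h'
      · exact Or.inr (Or.inl h')
      · exact Or.inr (Or.inr h')
  have hSu' : 0 < ∑ i, (-u) i ^ 2 := by simpa using hSu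
  have hSv' : 0 < ∑ i, (-v) i ^ 2 := by simpa using hSv
  have hA := gaussian_dot_tail_one u hSu hL
  have hB := gaussian_dot_tail_one (-u) hSu' hL
  have hC := gaussian_dot_tail_one v hSv hL
  have hD := gaussian_dot_tail_one (-v) hSv' hL
  rw [show (∑ i, (-u) i ^ 2) = ∑ i, u i ^ 2 by simp] at hB
  rw [show (∑ i, (-v) i ^ 2) = ∑ i, v i ^ 2 by simp] at hD
  calc stdGaussianPi (Fin m) _
      ≤ stdGaussianPi (Fin m) (({y | a ≤ u ⬝ᵥ y} ∪ {y | a ≤ (-u) ⬝ᵥ y}) ∪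
        ({y | b ≤ v ⬝ᵥ y} ∪ {y | b ≤ (-v) ⬝ᵥ y})) := measure_mono hsub
    _ ≤ stdGaussianPi (Fin m) ({y | a ≤ u ⬝ᵥ y} ∪ {y | a ≤ (-u) ⬝ᵥ y})
        + stdGaussianPi (Fin m) ({y | b ≤ v ⬝ᵥ y} ∪ {y | b ≤ (-v) ⬝ᵥ y}) :=
          measure_union_le _ _
    _ ≤ (stdGaussianPi (Fin m) {y | a ≤ u ⬝ᵥ y} + stdGaussianPi (Fin m) {y | a ≤ (-u) ⬝ᵥ y})
        + (stdGaussianPi (Fin m) {y | b ≤ v ⬝ᵥ y}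
          + stdGaussianPi (Fin m) {y | b ≤ (-v) ⬝ᵥ y}) :=
          add_le_add (measure_union_le _ _) (measure_union_le _ _)
    _ ≤ (ENNReal.ofReal (rexp (-L)) + ENNReal.ofReal (rexp (-L)))
        + (ENNReal.ofReal (rexp (-L)) + ENNReal.ofReal (rexp (-L))) :=
          add_le_add (add_le_add hA hB) (add_le_add hC hD)
    _ = ENNReal.ofReal δ := by
        rw [hexp, ← ENNReal.ofReal_add (by positivity) (by positivity),
          ← ENNReal.ofReal_add (by positivity) (by positivity)]
        congr 1
        ring
end
end

section
/- Concentration of the Randomized Response estimator for cut queries: Let n ≥ 2, ε ∈ (0,1], ν ∈ (0,1/2), and let ω be a weighted graph on Fin n. Let (X_{uv})_{(u,v)∈P} be independent random variables, where X_{uv} takes value 1 with probability (1 + ε·ω(u,v))/2 and value −1 with probability (1 − ε·ω(u,v))/2. Then for every nonempty proper subset S ⊆ Fin n with s = |S|: Pr[ |(1/ε)·Σ_{u∈S, v∉S} X_{uv} − Φ_ω(S)| > √(2·ln(1/ν)·s·(n−s))/ε ] ≤ 2ν, where the sum ranges over the s·(n−s) pairs with exactly one endpoint in S. -/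
open MeasureTheory ProbabilityTheory Matrix

noncomputable section

abbrev Pairs (n : ℕ) := {p : Fin n × Fin n // p.1 < p.2}

/-- A weighted graph: symmetric, zero diagonal, weights in `[0,1]`. -/
def IsWeightedGraph {n : ℕ} (ω : Fin n → Fin n → ℝ) : Prop :=
  (∀ u v, ω u v = ω v u) ∧ (∀ u, ω u u = 0) ∧ ∀ u v, 0 ≤ ω u v ∧ ω u v ≤ 1

/-- Two weighted graphs are neighbors if they agree except on one pair `{a,b}`. -/
def GraphNeighbors {n : ℕ} (ω ω' : Fin n → Fin n → ℝ) : Prop :=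
  ∃ a b : Fin n, a ≠ b ∧
    ∀ u v : Fin n, ({u, v} : Finset (Fin n)) ≠ {a, b} → ω u v = ω' u v

/-- The edge matrix of a weighted graph: the row indexed by `(u,v)` (with `u < v`) is
`√(ω u v) · (e_u - e_v)ᵀ`. -/
def edgeMatrix {n : ℕ} (ω : Fin n → Fin n → ℝ) : Matrix (Pairs n) (Fin n) ℝ :=
  Matrix.of fun p x =>
    Real.sqrt (ω p.1.1 p.1.2) * (if x = p.1.1 then 1 else if x = p.1.2 then -1 else 0)

/-- The modified weights `ω_H(u,v) = w/n + (1 - w/n)·ω(u,v)` for `u ≠ v`. -/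
def modWeights {n : ℕ} (w : ℝ) (ω : Fin n → Fin n → ℝ) : Fin n → Fin n → ℝ :=
  fun u v => if u = v then 0 else w / n + (1 - w / n) * ω u v

lemma hoeff_mgf_bound (m t : ℝ) (hm1 : -1 ≤ m) (hm2 : m ≤ 1) :
    (1 + m) / 2 * Real.exp t + (1 - m) / 2 * Real.exp (-t) ≤ Real.exp (m * t + t ^ 2 / 2) := by
  set A : ℝ := (1 + m) / 2 with hAdef
  set B : ℝ := (1 - m) / 2 with hBdef
  have hA0 : 0 ≤ A := by simp [hAdef]; linarith
  have hB0 : 0 ≤ B := by simp [hBdef]; linarith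
  have hAB : A + B = 1 := by simp [hAdef, hBdef]; ring
  have hABm : A - B = m := by simp [hAdef, hBdef]; ring
  set D : ℝ → ℝ := fun s => A * Real.exp s + B * Real.exp (-s) with hDdef
  set D' : ℝ → ℝ := fun s => A * Real.exp s - B * Real.exp (-s) with hD'def
  have hDpos : ∀ s, 0 < D s := by
    intro s
    have h1 : Real.exp (-|s|) ≤ Real.exp s := Real.exp_le_exp.2 (neg_abs_le s)
    have h2 : Real.exp (-|s|) ≤ Real.exp (-s) := Real.exp_le_exp.2 (by
      simp only [neg_le_neg_iff]; exact le_abs_self s)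
    have := Real.exp_pos (-|s|)
    have e1 := mul_le_mul_of_nonneg_left h1 hA0
    have e2 := mul_le_mul_of_nonneg_left h2 hB0
    simp only [hDdef]
    nlinarith
  have hD : ∀ s, HasDerivAt D (D' s) s := by
    intro s
    have h1 : HasDerivAt (fun s : ℝ => A * Real.exp s) (A * Real.exp s) s :=
      (Real.hasDerivAt_exp s).const_mul A
    have h2 : HasDerivAt (fun s : ℝ => Real.exp (-s)) (-Real.exp (-s)) s := by
      simpa [Function.comp_def] using (Real.hasDerivAt_exp (-s)).comp s (hasDerivAt_neg s)
    have := h1.add (h2.const_mul B)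
    simpa [hDdef, hD'def, mul_comm, sub_eq_add_neg, mul_neg, Pi.add_def, Pi.neg_def] using this
  have hD' : ∀ s, HasDerivAt D' (D s) s := by
    intro s
    have h1 : HasDerivAt (fun s : ℝ => A * Real.exp s) (A * Real.exp s) s :=
      (Real.hasDerivAt_exp s).const_mul A
    have h2 : HasDerivAt (fun s : ℝ => Real.exp (-s)) (-Real.exp (-s)) s := by
      simpa [Function.comp_def] using (Real.hasDerivAt_exp (-s)).comp s (hasDerivAt_neg s)
    have := h1.sub (h2.const_mul B)
    simpa [hDdef, hD'def, mul_comm, sub_eq_add_neg, mul_neg, Pi.add_def, Pi.neg_def] using this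
  set F : ℝ → ℝ := fun s => m * s + s ^ 2 / 2 - Real.log (D s) with hFdef
  set F' : ℝ → ℝ := fun s => m + s - D' s / D s with hF'def
  have hF : ∀ s, HasDerivAt F (F' s) s := by
    intro s
    have hlog : HasDerivAt (fun s => Real.log (D s)) (D' s / D s) s :=
      (hD s).log (hDpos s).ne'
    have hq : HasDerivAt (fun s : ℝ => m * s + s ^ 2 / 2) (m + s) s := by
      have h1 : HasDerivAt (fun s : ℝ => m * s) m s := by
        simpa using (hasDerivAt_id s).const_mul m
      have h2 : HasDerivAt (fun s : ℝ => s ^ 2 / 2) s s := by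
        simpa using (hasDerivAt_pow 2 s).div_const 2
      simpa [Pi.add_def] using h1.add h2
    exact hq.sub hlog
  have hF' : ∀ s, HasDerivAt F' ((D' s / D s) ^ 2) s := by
    intro s
    have hdiv : HasDerivAt (fun s => D' s / D s) ((D s * D s - D' s * D' s) / D s ^ 2) s :=
      (hD' s).div (hD s) (hDpos s).ne'
    have h1 : HasDerivAt (fun s : ℝ => m + s) 1 s := by
      simpa using (hasDerivAt_id s).const_add m
    have := h1.sub hdiv
    refine this.congr_deriv ?_
    have := (hDpos s).ne'
    field_simp
    ring
  have hF'mono : Monotone F' := by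
    have hdiff : Differentiable ℝ F' := fun s => (hF' s).differentiableAt
    apply monotone_of_deriv_nonneg hdiff
    intro s
    rw [(hF' s).deriv]
    positivity
  have hF'0 : F' 0 = 0 := by
    simp only [hF'def, hDdef, hD'def]
    simp only [Real.exp_zero, neg_zero, mul_one]
    rw [hABm, hAB]
    simp
  have hF0 : F 0 = 0 := by
    simp only [hFdef, hDdef]
    simp [Real.exp_zero, hAB]
  have hFnonneg : 0 ≤ F t := by
    rcases le_total 0 t with h | h
    · have hmono : MonotoneOn F (Set.Ici 0) := by
        apply monotoneOn_of_deriv_nonneg (convex_Ici 0)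
        · exact (Differentiable.continuous (fun s => (hF s).differentiableAt)).continuousOn
        · intro x _; exact (hF x).differentiableAt.differentiableWithinAt
        · intro x hx
          rw [(hF x).deriv]
          rw [← hF'0]
          exact hF'mono (le_of_lt (by simpa using hx))
      have := hmono (Set.self_mem_Ici) (Set.mem_Ici.2 h) h
      rwa [hF0] at this
    · have hmono : AntitoneOn F (Set.Iic 0) := by
        apply antitoneOn_of_deriv_nonpos (convex_Iic 0)
        · exact (Differentiable.continuous (fun s => (hF s).differentiableAt)).continuousOn
        · intro x _; exact (hF x).differentiableAt.differentiableWithinAt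
        · intro x hx
          rw [(hF x).deriv]
          rw [← hF'0]
          exact hF'mono (le_of_lt (by simpa using hx))
      have := hmono (Set.mem_Iic.2 h) Set.self_mem_Iic h
      rwa [hF0] at this
  have hlog : Real.log (D t) ≤ m * t + t ^ 2 / 2 := by
    simp only [hFdef] at hFnonneg; linarith
  have := (Real.log_le_iff_le_exp (hDpos t)).mp hlog
  simpa [hDdef] using this

lemma mgf_two_point {Ω : Type*} [MeasurableSpace Ω] (μ : Measure Ω) [IsProbabilityMeasure μ]
    (Y : Ω → ℝ) (hY : Measurable Y) (hv : ∀ o, Y o = 1 ∨ Y o = -1) (m : ℝ)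
    (hm1 : -1 ≤ m) (hm2 : m ≤ 1)
    (h1 : μ {o | Y o = 1} = ENNReal.ofReal ((1 + m) / 2))
    (h2 : μ {o | Y o = -1} = ENNReal.ofReal ((1 - m) / 2)) (t : ℝ) :
    mgf Y μ t = (1 + m) / 2 * Real.exp t + (1 - m) / 2 * Real.exp (-t) := by
  have hA : MeasurableSet {o | Y o = 1} := hY (measurableSet_singleton 1)
  have hB : MeasurableSet {o | Y o = -1} := hY (measurableSet_singleton (-1))
  have hsplit : (fun o => Real.exp (t * Y o)) =
      fun o => Set.indicator {o | Y o = 1} (fun _ => Real.exp t) o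
        + Set.indicator {o | Y o = -1} (fun _ => Real.exp (-t)) o := by
    funext o
    rcases hv o with h | h <;> simp [Set.indicator_apply, h] <;> norm_num
  rw [mgf, hsplit]
  rw [integral_add ((integrable_const _).indicator hA) ((integrable_const _).indicator hB)]
  rw [integral_indicator_const _ hA, integral_indicator_const _ hB, measureReal_def, measureReal_def, h1, h2,
    ENNReal.toReal_ofReal (by linarith), ENNReal.toReal_ofReal (by linarith)]
  simp [smul_eq_mul]

lemma integrable_exp_two_point {Ω : Type*} [MeasurableSpace Ω] (μ : Measure Ω)
    [IsProbabilityMeasure μ] (Y : Ω → ℝ) (hY : Measurable Y)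
    (hv : ∀ o, Y o = 1 ∨ Y o = -1) (t : ℝ) :
    Integrable (fun o => Real.exp (t * Y o)) μ := by
  refine (integrable_const (Real.exp |t|)).mono' ?_ (ae_of_all _ fun o => ?_)
  · exact ((hY.const_mul t).exp).aestronglyMeasurable
  · rw [Real.norm_eq_abs, abs_of_pos (Real.exp_pos _)]
    apply Real.exp_le_exp.2
    rcases hv o with h | h <;> rw [h] <;> simp [abs_le] <;> cases abs_cases t <;> linarith

lemma cut_sum {n : ℕ} (S : Finset (Fin n)) (f : Fin n → Fin n → ℝ)
    (hf : ∀ u v, f u v = f v u) :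
    (∑ p : Pairs n, if (p.1.1 ∈ S ∧ p.1.2 ∉ S) ∨ (p.1.2 ∈ S ∧ p.1.1 ∉ S)
        then f p.1.1 p.1.2 else 0)
      = ∑ u ∈ S, ∑ v ∈ Sᶜ, f u v := by
  classical
  rw [← Finset.sum_subtype
    (Finset.univ.filter (fun x : Fin n × Fin n => x.1 < x.2)) (by simp)
    (fun x => if (x.1 ∈ S ∧ x.2 ∉ S) ∨ (x.2 ∈ S ∧ x.1 ∉ S) then f x.1 x.2 else 0),
    Finset.sum_ite, Finset.sum_const_zero, add_zero, Finset.filter_filter]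
  have hsplit : (Finset.univ.filter fun x : Fin n × Fin n =>
        x.1 < x.2 ∧ ((x.1 ∈ S ∧ x.2 ∉ S) ∨ (x.2 ∈ S ∧ x.1 ∉ S)))
      = ((S ×ˢ Sᶜ).filter fun x => x.1 < x.2) ∪ ((Sᶜ ×ˢ S).filter fun x => x.1 < x.2) := by
    ext x
    simp only [Finset.mem_filter, Finset.mem_univ, true_and, Finset.mem_union,
      Finset.mem_product, Finset.mem_compl]
    tauto
  have hdisj : Disjoint ((S ×ˢ Sᶜ).filter fun x : Fin n × Fin n => x.1 < x.2)
      ((Sᶜ ×ˢ S).filter fun x => x.1 < x.2) := by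
    rw [Finset.disjoint_left]
    intro x hx hx'
    simp only [Finset.mem_filter, Finset.mem_product, Finset.mem_compl] at hx hx'
    exact hx'.1.1 hx.1.1
  rw [hsplit, Finset.sum_union hdisj]
  have hswap : (∑ x ∈ (Sᶜ ×ˢ S).filter (fun x => x.1 < x.2), f x.1 x.2)
      = ∑ x ∈ (S ×ˢ Sᶜ).filter (fun x => x.2 < x.1), f x.1 x.2 := by
    refine Finset.sum_nbij' (i := Prod.swap) (j := Prod.swap) ?_ ?_ ?_ ?_ ?_
    · intro x hx
      simp only [Finset.mem_filter, Finset.mem_product, Finset.mem_compl] at hx ⊢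
      exact ⟨⟨hx.1.2, hx.1.1⟩, hx.2⟩
    · intro x hx
      simp only [Finset.mem_filter, Finset.mem_product, Finset.mem_compl] at hx ⊢
      exact ⟨⟨hx.1.2, hx.1.1⟩, hx.2⟩
    · intro x _; rfl
    · intro x _; rfl
    · intro x _; exact hf x.1 x.2
  rw [hswap]
  have hfe : ((S ×ˢ Sᶜ).filter fun x : Fin n × Fin n => x.2 < x.1)
      = (S ×ˢ Sᶜ).filter fun x => ¬ x.1 < x.2 := by
    apply Finset.filter_congr
    intro x hx
    simp only [Finset.mem_product, Finset.mem_compl] at hx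
    have hne : x.1 ≠ x.2 := fun h => hx.2 (h ▸ hx.1)
    constructor
    · exact fun h => not_lt.2 h.le
    · exact fun h => lt_of_le_of_ne (not_lt.1 h) (Ne.symm hne)
  rw [hfe, Finset.sum_filter_add_sum_filter_not, Finset.sum_product]

set_option maxHeartbeats 1000000 in
/-- Concentration of the Randomized Response estimator for cut queries: independent `±1`
random variables `X_{uv}` with `E[X_{uv}] = ε·ω(u,v)` yield an estimator of the cut value
`Φ_ω(S)` with additive error at most `√(2·ln(1/ν)·s·(n−s))/ε` except with probability `2ν`. -/
theorem randomized_response_cut_concentration {n : ℕ} (hn : 2 ≤ n) {ε ν : ℝ}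
    (hε : 0 < ε ∧ ε ≤ 1) (hν : 0 < ν ∧ ν < 1 / 2)
    {ω : Fin n → Fin n → ℝ} (hω : IsWeightedGraph ω)
    {Ω : Type*} [MeasurableSpace Ω] (μpr : Measure Ω) [IsProbabilityMeasure μpr]
    (X : Pairs n → Ω → ℝ) (hmeas : ∀ p, Measurable (X p))
    (hindep : ProbabilityTheory.iIndepFun X μpr)
    (hval : ∀ p o, X p o = 1 ∨ X p o = -1)
    (hdist1 : ∀ p : Pairs n,
      μpr {o | X p o = 1} = ENNReal.ofReal ((1 + ε * ω p.1.1 p.1.2) / 2))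
    (hdist2 : ∀ p : Pairs n,
      μpr {o | X p o = -1} = ENNReal.ofReal ((1 - ε * ω p.1.1 p.1.2) / 2))
    (S : Finset (Fin n)) (hS : S.Nonempty) (hS' : S ≠ Finset.univ) :
    μpr {o | Real.sqrt (2 * Real.log (1 / ν) * S.card * ((n : ℝ) - S.card)) / ε
        < |ε⁻¹ * (∑ p : Pairs n,
              if (p.1.1 ∈ S ∧ p.1.2 ∉ S) ∨ (p.1.2 ∈ S ∧ p.1.1 ∉ S) then X p o else 0)
            - ∑ u ∈ S, ∑ v ∈ Sᶜ, ω u v|}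
    ≤ ENNReal.ofReal (2 * ν) := by
  classical
  obtain ⟨hε0, hε1⟩ := hε
  obtain ⟨hν0, hν1⟩ := hν
  obtain ⟨hsym, hdiag, hbound⟩ := hω
  set C : Finset (Pairs n) :=
    Finset.univ.filter (fun p : Pairs n =>
      (p.1.1 ∈ S ∧ p.1.2 ∉ S) ∨ (p.1.2 ∈ S ∧ p.1.1 ∉ S)) with hC
  set Φ : ℝ := ∑ u ∈ S, ∑ v ∈ Sᶜ, ω u v with hΦ
  set k : ℝ := (S.card : ℝ) * ((n : ℝ) - S.card) with hk
  set L : ℝ := Real.log (1 / ν) with hL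
  set b : ℝ := Real.sqrt (2 * L * k) with hb
  -- basic numeric facts
  have hcompl : ((Sᶜ.card : ℝ)) = (n : ℝ) - S.card := by
    have h1 : S.card ≤ n := by
      simpa using S.card_le_univ
    rw [Finset.card_compl, Fintype.card_fin, Nat.cast_sub h1]
  have hScard : (1 : ℝ) ≤ S.card := by
    exact_mod_cast Finset.card_pos.2 hS
  have hcompl_pos : (1 : ℝ) ≤ (n : ℝ) - S.card := by
    rw [← hcompl]
    exact_mod_cast Finset.card_pos.2 (by
      rwa [← Finset.compl_ne_univ_iff_nonempty, compl_compl]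
      )
  have hk1 : (1 : ℝ) ≤ k := by nlinarith
  have hkpos : (0 : ℝ) < k := by linarith
  have hL0 : 0 < L := Real.log_pos (by rw [lt_div_iff₀ hν0]; linarith)
  have hbpos : 0 < b := Real.sqrt_pos.2 (by positivity)
  have hb2 : b ^ 2 = 2 * L * k := Real.sq_sqrt (by positivity)
  -- combinatorial identities
  have hsum1 : ((C.card : ℝ)) = k := by
    have h := cut_sum S (fun _ _ => (1 : ℝ)) (fun _ _ => rfl)
    rw [Finset.sum_boole] at h
    simp only [Finset.sum_const, nsmul_eq_mul, mul_one] at h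
    rw [hk, ← hcompl, ← h, hC]
  have hsumω : ∑ p ∈ C, ε * ω p.1.1 p.1.2 = ε * Φ := by
    have h := cut_sum S ω hsym
    rw [hΦ, ← h, hC, Finset.sum_filter, Finset.mul_sum]
    congr 1
    funext p
    split <;> simp
  -- the estimator as a finset sum
  set T : Ω → ℝ := ∑ p ∈ C, X p with hT
  have hTo : ∀ o, T o = ∑ p : Pairs n,
      if (p.1.1 ∈ S ∧ p.1.2 ∉ S) ∨ (p.1.2 ∈ S ∧ p.1.1 ∉ S) then X p o else 0 := by
    intro o
    rw [hT, Finset.sum_apply, hC, Finset.sum_filter]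
  -- bounds on the weights
  have hm : ∀ p : Pairs n, -1 ≤ ε * ω p.1.1 p.1.2 ∧ ε * ω p.1.1 p.1.2 ≤ 1 := by
    intro p
    constructor
    · have := (hbound p.1.1 p.1.2).1
      nlinarith
    · have h1 := (hbound p.1.1 p.1.2).1
      have h2 := (hbound p.1.1 p.1.2).2
      nlinarith
  -- integrability
  have hint : ∀ t : ℝ, Integrable (fun o => Real.exp (t * T o)) μpr := by
    intro t
    exact hindep.integrable_exp_mul_sum hmeas
      (fun p _ => integrable_exp_two_point μpr (X p) (hmeas p) (hval p) t)
  -- mgf bound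
  have hmgf : ∀ t : ℝ, mgf T μpr t ≤ Real.exp (t * (ε * Φ) + k * t ^ 2 / 2) := by
    intro t
    rw [hT, hindep.mgf_sum hmeas C]
    calc ∏ p ∈ C, mgf (X p) μpr t
        ≤ ∏ p ∈ C, Real.exp ((ε * ω p.1.1 p.1.2) * t + t ^ 2 / 2) := by
          apply Finset.prod_le_prod (fun p _ => mgf_nonneg)
          intro p _
          rw [mgf_two_point μpr (X p) (hmeas p) (hval p) _ (hm p).1 (hm p).2
            (hdist1 p) (hdist2 p) t]
          exact hoeff_mgf_bound _ t (hm p).1 (hm p).2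
      _ = Real.exp (∑ p ∈ C, ((ε * ω p.1.1 p.1.2) * t + t ^ 2 / 2)) := by
          rw [Real.exp_sum]
      _ = Real.exp (t * (ε * Φ) + k * t ^ 2 / 2) := by
          rw [Finset.sum_add_distrib, ← Finset.sum_mul, hsumω, Finset.sum_const,
            nsmul_eq_mul, ← hsum1]
          ring_nf
  -- Chernoff bounds
  set t0 : ℝ := b / k with ht0def
  have ht0 : 0 < t0 := by positivity
  have hupper : (μpr {o | ε * Φ + b ≤ T o}).toReal ≤ ν := by
    calc (μpr {o | ε * Φ + b ≤ T o}).toReal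
        ≤ Real.exp (-t0 * (ε * Φ + b)) * mgf T μpr t0 :=
          measure_ge_le_exp_mul_mgf _ ht0.le (hint t0)
      _ ≤ Real.exp (-t0 * (ε * Φ + b)) * Real.exp (t0 * (ε * Φ) + k * t0 ^ 2 / 2) := by
          exact mul_le_mul_of_nonneg_left (hmgf t0) (Real.exp_pos _).le
      _ = Real.exp (-(t0 * b) + k * t0 ^ 2 / 2) := by
          rw [← Real.exp_add]; ring_nf
      _ = ν := by
          have harg : -(t0 * b) + k * t0 ^ 2 / 2 = -L := by
            rw [ht0def]
            field_simp
            nlinarith [hb2]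
          rw [harg, hL, one_div, Real.log_inv, neg_neg, Real.exp_log hν0]
  have hlower : (μpr {o | T o ≤ ε * Φ - b}).toReal ≤ ν := by
    calc (μpr {o | T o ≤ ε * Φ - b}).toReal
        ≤ Real.exp (-(-t0) * (ε * Φ - b)) * mgf T μpr (-t0) :=
          measure_le_le_exp_mul_mgf _ (by linarith) (hint (-t0))
      _ ≤ Real.exp (-(-t0) * (ε * Φ - b)) * Real.exp ((-t0) * (ε * Φ) + k * (-t0) ^ 2 / 2) := by
          exact mul_le_mul_of_nonneg_left (hmgf (-t0)) (Real.exp_pos _).le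
      _ = Real.exp (-(t0 * b) + k * t0 ^ 2 / 2) := by
          rw [← Real.exp_add]; ring_nf
      _ = ν := by
          have harg : -(t0 * b) + k * t0 ^ 2 / 2 = -L := by
            rw [ht0def]
            field_simp
            nlinarith [hb2]
          rw [harg, hL, one_div, Real.log_inv, neg_neg, Real.exp_log hν0]
  -- event inclusion
  have hthresh : Real.sqrt (2 * Real.log (1 / ν) * S.card * ((n : ℝ) - S.card)) = b := by
    rw [hb, hk, hL]; ring_nf
  have hsubset : {o | Real.sqrt (2 * Real.log (1 / ν) * S.card * ((n : ℝ) - S.card)) / ε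
        < |ε⁻¹ * (∑ p : Pairs n,
              if (p.1.1 ∈ S ∧ p.1.2 ∉ S) ∨ (p.1.2 ∈ S ∧ p.1.1 ∉ S) then X p o else 0)
            - Φ|}
      ⊆ {o | ε * Φ + b ≤ T o} ∪ {o | T o ≤ ε * Φ - b} := by
    intro o ho
    simp only [Set.mem_setOf_eq, hthresh, ← hTo o] at ho
    have heq : ε⁻¹ * T o - Φ = (T o - ε * Φ) / ε := by field_simp
    rw [heq, abs_div, abs_of_pos hε0] at ho
    have hb' : b < |T o - ε * Φ| := by
      have := mul_lt_mul_of_pos_right ho hε0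
      rwa [div_mul_cancel₀ _ hε0.ne', div_mul_cancel₀ _ hε0.ne'] at this
    rcases lt_abs.mp hb' with h | h
    · left; simp only [Set.mem_setOf_eq]; linarith
    · right; simp only [Set.mem_setOf_eq]; linarith
  -- conclude
  have hmeasure : ∀ (E : Set Ω), (μpr E).toReal ≤ ν → μpr E ≤ ENNReal.ofReal ν := by
    intro E hE
    rw [← ENNReal.ofReal_toReal (measure_ne_top μpr E)]
    exact ENNReal.ofReal_le_ofReal hE
  calc μpr _ ≤ μpr ({o | ε * Φ + b ≤ T o} ∪ {o | T o ≤ ε * Φ - b}) :=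
        measure_mono hsubset
    _ ≤ μpr {o | ε * Φ + b ≤ T o} + μpr {o | T o ≤ ε * Φ - b} := measure_union_le _ _
    _ ≤ ENNReal.ofReal ν + ENNReal.ofReal ν :=
        add_le_add (hmeasure _ hupper) (hmeasure _ hlower)
    _ = ENNReal.ofReal (2 * ν) := by
        rw [← ENNReal.ofReal_add hν0.le hν0.le]; ring_nf
end
end
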